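/- arXiv:1306.5255 — 2 statements merged into one kernel-verified Lean document; each statement's English description precedes it below -/
import Mathlib

section
/- (Dominant case) Suppose g ∈ G̃ is not a translation and g(A₀) ⊆ C. Then there exists s ∈ S_aff fixing the origin (that is, s = r_{H_{α,0}} for some α ∈ Φ) such that ℓ(sg) > ℓ(g), ℓ(gs) > ℓ(g), and sgs ≠ g. -/
open RealInnerProductSpace

/-- A finite, reduced, irreducible, crystallographic root system spanning `V`,
together with a regular vector `ξ` determining the positive system. -/
structure RootSystemData (V : Type*) [NormedAddCommGroup V] [InnerProductSpace ℝ V] where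
  Φ : Set V
  ξ : V
  finite : Φ.Finite
  nonzero : ∀ α ∈ Φ, α ≠ 0
  reduced : ∀ α ∈ Φ, ∀ c : ℝ, c • α ∈ Φ → c = 1 ∨ c = -1
  crystallographic : ∀ α ∈ Φ, ∀ β ∈ Φ, ∃ n : ℤ, 2 * ⟪β, α⟫ / ⟪α, α⟫ = (n : ℝ)
  reflect_mem : ∀ α ∈ Φ, ∀ β ∈ Φ, β - (2 * ⟪β, α⟫ / ⟪α, α⟫) • α ∈ Φ
  spans : Submodule.span ℝ Φ = ⊤
  irreducible : ∀ Φ₁ Φ₂ : Set V, Φ = Φ₁ ∪ Φ₂ →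
    (∀ a ∈ Φ₁, ∀ b ∈ Φ₂, ⟪a, b⟫ = (0 : ℝ)) → Φ₁ = ∅ ∨ Φ₂ = ∅
  regular : ∀ α ∈ Φ, ⟪ξ, α⟫ ≠ (0 : ℝ)

/-- The affine orthogonal reflection of `V` fixing the hyperplane `{x | ⟪x, α⟫ = k}` pointwise. -/
noncomputable def reflPt {V : Type*} [NormedAddCommGroup V] [InnerProductSpace ℝ V]
    (α : V) (k : ℝ) (x : V) : V := x - ((⟪x, α⟫ - k) * (2 / ⟪α, α⟫)) • α

namespace RootSystemData

variable {V : Type*} [NormedAddCommGroup V] [InnerProductSpace ℝ V]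

/-- The positive system `Φ⁺` determined by `ξ`. -/
def pos (R : RootSystemData V) : Set V := {α | α ∈ R.Φ ∧ 0 < ⟪R.ξ, α⟫}

/-- The open dominant Weyl chamber `C`. -/
def chamber (R : RootSystemData V) : Set V := {x | ∀ α ∈ R.pos, 0 < ⟪x, α⟫}

/-- The opposite chamber `−C`. -/
def antiChamber (R : RootSystemData V) : Set V := {x | -x ∈ R.chamber}

/-- The affine root hyperplane `H_{α,k}`. -/
def hyp (R : RootSystemData V) (α : V) (k : ℤ) : Set V := {x | ⟪x, α⟫ = (k : ℝ)}

/-- `H` is an affine root hyperplane. -/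
def IsHyp (R : RootSystemData V) (H : Set V) : Prop := ∃ α ∈ R.Φ, ∃ k : ℤ, H = R.hyp α k

/-- The union of all affine root hyperplanes. -/
def hypUnion (R : RootSystemData V) : Set V := {x | ∃ α ∈ R.Φ, ∃ k : ℤ, ⟪x, α⟫ = (k : ℝ)}

/-- An alcove: a connected component of the complement of the union of the affine root
hyperplanes. -/
def IsAlcove (R : RootSystemData V) (A : Set V) : Prop :=
  ∃ x ∈ R.hypUnionᶜ, A = connectedComponentIn R.hypUnionᶜ x

/-- The base alcove `A₀`. -/
def baseAlcove (R : RootSystemData V) : Set V :=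
  {x | ∀ α ∈ R.pos, 0 < ⟪x, α⟫ ∧ ⟪x, α⟫ < 1}

/-- The sets `A` and `B` lie in the same open half-space determined by the affine root
hyperplane `H`. -/
def SameSide (R : RootSystemData V) (H A B : Set V) : Prop :=
  ∃ α ∈ R.Φ, ∃ k : ℤ, H = R.hyp α k ∧
    ((∀ x ∈ A ∪ B, ⟪x, α⟫ < (k : ℝ)) ∨ (∀ x ∈ A ∪ B, (k : ℝ) < ⟪x, α⟫))

/-- The affine root hyperplane `H` separates `A` and `B`: they lie in the two different open
half-spaces determined by `H`. -/
def Separates (R : RootSystemData V) (H A B : Set V) : Prop :=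
  ∃ α ∈ R.Φ, ∃ k : ℤ, H = R.hyp α k ∧
    (((∀ x ∈ A, ⟪x, α⟫ < (k : ℝ)) ∧ (∀ x ∈ B, (k : ℝ) < ⟪x, α⟫)) ∨
     ((∀ x ∈ B, ⟪x, α⟫ < (k : ℝ)) ∧ (∀ x ∈ A, (k : ℝ) < ⟪x, α⟫)))

/-- `d(A, B)`: the number of affine root hyperplanes separating `A` from `B`. -/
noncomputable def dist (R : RootSystemData V) (A B : Set V) : ℕ :=
  {H : Set V | R.IsHyp H ∧ R.Separates H A B}.ncard

/-- Two alcoves are adjacent. -/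
def Adjacent (R : RootSystemData V) (A B : Set V) : Prop := A ≠ B ∧ R.dist A B = 1

/-- `H` is a wall of the alcove `A`: it is an affine root hyperplane with
`d(A, r_H(A)) = 1`. -/
def IsWall (R : RootSystemData V) (H A : Set V) : Prop :=
  ∃ α ∈ R.Φ, ∃ k : ℤ, H = R.hyp α k ∧ R.dist A (reflPt α (k : ℝ) '' A) = 1

/-- `H` is a wall of the dominant chamber `C`: `H ∩ C = ∅` and `H ∩ closure C` affinely
spans `H`. -/
def IsChamberWall (R : RootSystemData V) (H : Set V) : Prop :=
  R.IsHyp H ∧ H ∩ R.chamber = ∅ ∧ affineSpan ℝ (H ∩ closure R.chamber) = affineSpan ℝ H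

/-- A special point of `V`. -/
def IsSpecial (R : RootSystemData V) (v : V) : Prop := ∀ α ∈ R.Φ, ∃ n : ℤ, ⟪v, α⟫ = (n : ℝ)

/-- The finite Weyl group `W₀`: the group of linear isometries of `V` generated by the
reflections in the hyperplanes `H_{α,0}`, `α ∈ Φ`. -/
def W0 (R : RootSystemData V) : Subgroup (V ≃ₗᵢ[ℝ] V) :=
  Subgroup.closure {f | ∃ α ∈ R.Φ, ∀ x, f x = reflPt α 0 x}

/-- A finite gallery `(Bs 0, …, Bs n)`: consecutive alcoves are adjacent. -/
def IsGallery (R : RootSystemData V) (Bs : ℕ → Set V) (n : ℕ) : Prop :=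
  (∀ i ≤ n, R.IsAlcove (Bs i)) ∧ ∀ i < n, R.Adjacent (Bs i) (Bs (i + 1))

/-- The Umbrella property for a gallery `(Bs 0, …, Bs n)`, an alcove `A` and a wall `H`
of `A`: every alcove of the gallery is on the same side of `H` as `A`, and the gallery can
be extended to a minimal gallery from `Bs 0` to `A`. -/
def Umbrella (R : RootSystemData V) (Bs : ℕ → Set V) (n : ℕ) (A H : Set V) : Prop :=
  R.IsWall H A ∧ (∀ i ≤ n, R.SameSide H (Bs i) A) ∧
    ∃ m, n ≤ m ∧ ∃ Cs : ℕ → Set V, (∀ i ≤ n, Cs i = Bs i) ∧ Cs m = A ∧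
      R.IsGallery Cs m ∧ R.dist (Cs 0) (Cs m) = m

/-- The length of an invertible affine transformation: `ℓ(g) = d(A₀, g(A₀))`. -/
noncomputable def len (R : RootSystemData V) (g : V ≃ᵃ[ℝ] V) : ℕ :=
  R.dist R.baseAlcove (⇑g '' R.baseAlcove)

/-- `g` is a translation of `V`. -/
def IsTranslation (g : V ≃ᵃ[ℝ] V) : Prop := ∃ v : V, ∀ x, g x = x + v

/-- `s ∈ S_aff`: `s` is the reflection in an affine root hyperplane which is a wall of the
base alcove `A₀`. -/
def IsSimpleRefl (R : RootSystemData V) (s : V ≃ᵃ[ℝ] V) : Prop :=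
  ∃ α ∈ R.Φ, ∃ k : ℤ, R.IsWall (R.hyp α k) R.baseAlcove ∧ ∀ x, s x = reflPt α (k : ℝ) x

end RootSystemData

/-- The sequence of iterated conjugates `g, s₁gs₁, s₂s₁gs₁s₂, …`. -/
noncomputable def conjSeq {V : Type*} [NormedAddCommGroup V] [InnerProductSpace ℝ V]
    (g : V ≃ᵃ[ℝ] V) (ss : ℕ → V ≃ᵃ[ℝ] V) : ℕ → V ≃ᵃ[ℝ] V
  | 0 => g
  | n + 1 => ss n * conjSeq g ss n * ss n

namespace RootSystemData

variable {V : Type*} [NormedAddCommGroup V] [InnerProductSpace ℝ V]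

/-- The Diamond Property for `g`: a sequence of length-preserving conjugations by simple
reflections leads to an element `g′` admitting a simple reflection `s` with
`ℓ(sg′) > ℓ(g′)`, `ℓ(g′s) > ℓ(g′)` and `sg′s ≠ g′`. -/
def DiamondProperty (R : RootSystemData V) (g : V ≃ᵃ[ℝ] V) : Prop :=
  ∃ (n : ℕ) (ss : ℕ → V ≃ᵃ[ℝ] V), (∀ i < n, R.IsSimpleRefl (ss i)) ∧
    (∀ i < n, R.len (conjSeq g ss (i + 1)) = R.len g) ∧
    ∃ s : V ≃ᵃ[ℝ] V, R.IsSimpleRefl s ∧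
      R.len (s * conjSeq g ss n) > R.len (conjSeq g ss n) ∧
      R.len (conjSeq g ss n * s) > R.len (conjSeq g ss n) ∧
      s * conjSeq g ss n * s ≠ conjSeq g ss n

end RootSystemData


/-! ### Auxiliary development -/

section AuxRefl

variable {V : Type*} [NormedAddCommGroup V] [InnerProductSpace ℝ V]

/-- The linear reflection in the hyperplane orthogonal to `α`. -/
noncomputable def sReflMap (α : V) : V →ₗ[ℝ] V :=
  LinearMap.id - ((2 / ⟪α, α⟫) • (innerₛₗ ℝ α)).smulRight α

lemma sReflMap_apply (α x : V) : sReflMap α x = x - (2 * ⟪x, α⟫ / ⟪α, α⟫) • α := by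
  simp [sReflMap, real_inner_comm]
  ring_nf

lemma sReflMap_invol (α : V) : Function.Involutive (sReflMap α) := by
  intro x
  rcases eq_or_ne α 0 with rfl | hα
  · simp [sReflMap_apply]
  have hA : ⟪α, α⟫ ≠ (0:ℝ) := fun h => hα (inner_self_eq_zero.mp h)
  rw [sReflMap_apply, sReflMap_apply, inner_sub_left, real_inner_smul_left]
  match_scalars <;> field_simp <;> ring

lemma sReflMap_inner (α x : V) : ⟪sReflMap α x, sReflMap α x⟫ = ⟪x, x⟫ := by
  rcases eq_or_ne α 0 with rfl | hα
  · simp [sReflMap_apply]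
  have hA : ⟪α, α⟫ ≠ (0:ℝ) := fun h => hα (inner_self_eq_zero.mp h)
  rw [sReflMap_apply]
  rw [inner_sub_left, inner_sub_right, inner_sub_right, real_inner_smul_left,
    real_inner_smul_left, real_inner_smul_right, real_inner_smul_right]
  rw [real_inner_comm α x]
  field_simp
  ring

/-- The reflection in the hyperplane orthogonal to `α`, as a linear isometry equivalence. -/
noncomputable def sRefl (α : V) : V ≃ₗᵢ[ℝ] V :=
  { LinearEquiv.ofInvolutive (sReflMap α) (sReflMap_invol α) with
    norm_map' := by
      intro x
      have h : ⟪sReflMap α x, sReflMap α x⟫ = ⟪x, x⟫ := sReflMap_inner α x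
      show ‖sReflMap α x‖ = ‖x‖
      rw [real_inner_self_eq_norm_sq, real_inner_self_eq_norm_sq] at h
      have := norm_nonneg (sReflMap α x)
      have := norm_nonneg x
      nlinarith }

lemma sRefl_apply (α x : V) : sRefl α x = x - (2 * ⟪x, α⟫ / ⟪α, α⟫) • α := sReflMap_apply α x

lemma sRefl_eq_reflPt (α x : V) : sRefl α x = reflPt α 0 x := by
  rw [sRefl_apply, reflPt]; ring_nf

lemma sRefl_invol (α x : V) : sRefl α (sRefl α x) = x := sReflMap_invol α x

lemma sRefl_symm (α : V) : (sRefl α).symm = sRefl α := by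
  ext x
  have : sRefl α ((sRefl α).symm x) = sRefl α (sRefl α x) := by
    rw [(sRefl α).apply_symm_apply, sRefl_invol]
  exact (sRefl α).injective this

lemma sRefl_inv (α : V) : (sRefl α)⁻¹ = sRefl α := sRefl_symm α

lemma sRefl_self (α : V) (hα : α ≠ 0) : sRefl α α = -α := by
  have hA : ⟪α, α⟫ ≠ (0:ℝ) := fun h => hα (inner_self_eq_zero.mp h)
  rw [sRefl_apply]
  field_simp
  module

lemma reflPt_invol (α : V) (k : ℝ) (x : V) (hα : α ≠ 0) : reflPt α k (reflPt α k x) = x := by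
  have hA : ⟪α, α⟫ ≠ (0:ℝ) := fun h => hα (inner_self_eq_zero.mp h)
  rw [reflPt, reflPt, inner_sub_left, real_inner_smul_left]
  match_scalars <;> field_simp <;> ring

end AuxRefl

namespace RootSystemData

section AuxRoot

variable {V : Type*} [NormedAddCommGroup V] [InnerProductSpace ℝ V] (R : RootSystemData V)

lemma _root_.real_inner_self_pos' {x : V} (h : x ≠ 0) : (0:ℝ) < ⟪x, x⟫ :=
  lt_of_not_ge (fun hle => h (real_inner_self_nonpos.mp hle))

lemma inner_self_pos_of_mem {α : V} (hα : α ∈ R.Φ) : (0:ℝ) < ⟪α, α⟫ :=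
  real_inner_self_pos' (R.nonzero α hα)

lemma neg_mem {α : V} (hα : α ∈ R.Φ) : -α ∈ R.Φ := by
  have h := R.reflect_mem α hα α hα
  have hA : ⟪α, α⟫ ≠ (0:ℝ) := ne_of_gt (R.inner_self_pos_of_mem hα)
  have : 2 * ⟪α, α⟫ / ⟪α, α⟫ = (2:ℝ) := by field_simp
  rw [this] at h
  have h2 : α - (2:ℝ) • α = -α := by module
  rwa [h2] at h

lemma pos_subset : R.pos ⊆ R.Φ := fun _ h => h.1

lemma mem_pos_or_neg {α : V} (hα : α ∈ R.Φ) : α ∈ R.pos ∨ -α ∈ R.pos := by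
  rcases lt_or_gt_of_ne (R.regular α hα) with h | h
  · right; exact ⟨R.neg_mem hα, by rw [inner_neg_right]; linarith⟩
  · left; exact ⟨hα, h⟩

lemma not_neg_pos {α : V} (hα : α ∈ R.pos) : -α ∉ R.pos := by
  rintro ⟨-, h⟩
  rw [inner_neg_right] at h
  have := hα.2
  linarith

lemma sRefl_root_mem {α β : V} (hα : α ∈ R.Φ) (hβ : β ∈ R.Φ) : sRefl α β ∈ R.Φ := by
  rw [sRefl_apply]
  exact R.reflect_mem α hα β hβ

lemma parallel_eq_or_neg {α β : V} (hα : α ∈ R.Φ) (hβ : β ∈ R.Φ) (c : ℝ) (h : β = c • α) :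
    β = α ∨ β = -α := by
  rcases R.reduced α hα c (h ▸ hβ) with rfl | rfl
  · left; rw [h, one_smul]
  · right; rw [h, neg_smul, one_smul]

/-- Key classical lemma: if two roots make an acute angle and are not equal nor opposite,
their difference is a root. -/
lemma sub_mem_of_inner_pos {α β : V} (hα : α ∈ R.Φ) (hβ : β ∈ R.Φ)
    (hin : (0:ℝ) < ⟪α, β⟫) (hne : α ≠ β) (hnn : β ≠ -α) : α - β ∈ R.Φ := by
  have hA : (0:ℝ) < ⟪α, α⟫ := R.inner_self_pos_of_mem hα
  have hB : (0:ℝ) < ⟪β, β⟫ := R.inner_self_pos_of_mem hβ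
  -- strict Cauchy-Schwarz
  have hv : β - (⟪β, α⟫ / ⟪α, α⟫) • α ≠ 0 := by
    intro h
    have hpar : β = (⟪β, α⟫ / ⟪α, α⟫) • α := by
      have := sub_eq_zero.mp h; exact this
    rcases R.parallel_eq_or_neg hα hβ _ hpar with rfl | rfl
    · exact hne rfl
    · exact hnn rfl
  have hvv : (0:ℝ) < ⟪β - (⟪β, α⟫ / ⟪α, α⟫) • α, β - (⟪β, α⟫ / ⟪α, α⟫) • α⟫ :=
    real_inner_self_pos' hv
  rw [inner_sub_left, inner_sub_right, inner_sub_right, real_inner_smul_left,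
    real_inner_smul_left, real_inner_smul_right, real_inner_smul_right,
    real_inner_comm α β] at hvv
  have hA' : ⟪α, α⟫ ≠ (0:ℝ) := ne_of_gt hA
  have hCS : ⟪α, β⟫ * ⟪α, β⟫ < ⟪α, α⟫ * ⟪β, β⟫ := by
    have hc : ⟪α, β⟫ / ⟪α, α⟫ * (⟪α, β⟫ / ⟪α, α⟫ * ⟪α, α⟫) = ⟪α, β⟫ * ⟪α, β⟫ / ⟪α, α⟫ := by
      field_simp
    rw [hc] at hvv
    have h2 : (0:ℝ) < ⟪α, α⟫ * (⟪β, β⟫ - ⟪α, β⟫ / ⟪α, α⟫ * ⟪α, β⟫ -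
        (⟪α, β⟫ / ⟪α, α⟫ * ⟪α, β⟫ - ⟪α, β⟫ * ⟪α, β⟫ / ⟪α, α⟫)) := mul_pos hA hvv
    have h3 : ⟪α, α⟫ * (⟪β, β⟫ - ⟪α, β⟫ / ⟪α, α⟫ * ⟪α, β⟫ -
        (⟪α, β⟫ / ⟪α, α⟫ * ⟪α, β⟫ - ⟪α, β⟫ * ⟪α, β⟫ / ⟪α, α⟫)) =
        ⟪α, α⟫ * ⟪β, β⟫ - ⟪α, β⟫ * ⟪α, β⟫ := by
      field_simp
      ring
    rw [h3] at h2
    linarith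
  obtain ⟨n, hn⟩ := R.crystallographic α hα β hβ
  obtain ⟨m, hm⟩ := R.crystallographic β hβ α hα
  have hba : (0:ℝ) < ⟪β, α⟫ := by rwa [real_inner_comm]
  have hnpos : (0:ℝ) < (n:ℝ) := by rw [← hn]; positivity
  have hmpos : (0:ℝ) < (m:ℝ) := by
    rw [← hm]
    have : (0:ℝ) < ⟪α, β⟫ := hin
    positivity
  have hn1 : 1 ≤ n := by
    have : (0:ℤ) < n := by exact_mod_cast hnpos
    omega
  have hm1 : 1 ≤ m := by
    have : (0:ℤ) < m := by exact_mod_cast hmpos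
    omega
  have hprod : (n:ℝ) * (m:ℝ) < 4 := by
    rw [← hn, ← hm]
    rw [div_mul_div_comm]
    rw [div_lt_iff₀ (by positivity)]
    have : ⟪β, α⟫ = ⟪α, β⟫ := real_inner_comm α β
    nlinarith
  have hnm : n = 1 ∨ m = 1 := by
    by_contra hcon
    push_neg at hcon
    have h2n : 2 ≤ n := by omega
    have h2m : 2 ≤ m := by omega
    have : (4:ℝ) ≤ (n:ℝ) * (m:ℝ) := by
      have : (2:ℝ) ≤ (n:ℝ) := by exact_mod_cast h2n
      have : (2:ℝ) ≤ (m:ℝ) := by exact_mod_cast h2m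
      nlinarith
    linarith
  rcases hnm with rfl | rfl
  · -- 2⟪β,α⟫/⟪α,α⟫ = 1, so β - α ∈ Φ
    have h := R.reflect_mem α hα β hβ
    rw [hn] at h
    have h2 : β - ((1:ℤ):ℝ) • α = -(α - β) := by push_cast; module
    rw [h2] at h
    have := R.neg_mem h
    rwa [neg_neg] at this
  · have h := R.reflect_mem β hβ α hα
    rw [hm] at h
    have h2 : α - ((1:ℤ):ℝ) • β = α - β := by push_cast; module
    rwa [h2] at h

end AuxRoot

end RootSystemData

namespace RootSystemData

section Simples

variable {V : Type*} [NormedAddCommGroup V] [InnerProductSpace ℝ V] (R : RootSystemData V)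

/-- The simple roots: positive roots that are not sums of two positive roots. -/
def simples : Set V := {γ | γ ∈ R.pos ∧ ¬∃ α ∈ R.pos, ∃ β ∈ R.pos, γ = α + β}

/-- `v` is a nonnegative integral combination of simple roots. -/
def IsNN (v : V) : Prop :=
  ∃ n : V →₀ ℕ, ↑n.support ⊆ R.simples ∧ v = n.sum (fun δ k => (k : ℝ) • δ)

lemma isNN_add {v w : V} (hv : R.IsNN v) (hw : R.IsNN w) : R.IsNN (v + w) := by
  obtain ⟨n, hn, rfl⟩ := hv
  obtain ⟨m, hm, rfl⟩ := hw
  classical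
  refine ⟨n + m, ?_, ?_⟩
  · intro x hx
    rw [Finset.mem_coe, Finsupp.mem_support_iff, Finsupp.add_apply] at hx
    rcases Nat.eq_zero_or_pos (n x) with h0 | h0
    · exact hm (Finsupp.mem_support_iff.mpr (by omega))
    · exact hn (Finsupp.mem_support_iff.mpr (by omega))
  · rw [Finsupp.sum_add_index']
    · simp
    · intro δ k l
      push_cast
      rw [add_smul]

lemma isNN_simple {γ : V} (hγ : γ ∈ R.simples) : R.IsNN γ := by
  classical
  refine ⟨Finsupp.single γ 1, ?_, ?_⟩
  · intro x hx
    rw [Finset.mem_coe] at hx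
    have := Finsupp.support_single_subset hx
    rw [Finset.mem_singleton] at this
    subst this
    exact hγ
  · rw [Finsupp.sum_single_index] <;> simp

lemma pos_finite : R.pos.Finite := R.finite.subset R.pos_subset

lemma pos_isNN : ∀ α ∈ R.pos, R.IsNN α := by
  by_contra hcon
  push_neg at hcon
  have hT : {α | α ∈ R.pos ∧ ¬R.IsNN α}.Nonempty := by
    obtain ⟨α, h1, h2⟩ := hcon; exact ⟨α, h1, h2⟩
  have hTfin : {α | α ∈ R.pos ∧ ¬R.IsNN α}.Finite :=
    R.pos_finite.subset (fun x hx => hx.1)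
  obtain ⟨α, ⟨hαp, hαn⟩, hmin⟩ := Set.exists_min_image _ (fun α => ⟪R.ξ, α⟫) hTfin hT
  have hαs : α ∉ R.simples := fun h => hαn (R.isNN_simple h)
  have : ∃ β ∈ R.pos, ∃ δ ∈ R.pos, α = β + δ := by
    by_contra h
    exact hαs ⟨hαp, h⟩
  obtain ⟨β, hβ, δ, hδ, rfl⟩ := this
  have hξβ : ⟪R.ξ, β⟫ < ⟪R.ξ, β + δ⟫ := by
    rw [inner_add_right]; linarith [hδ.2]
  have hξδ : ⟪R.ξ, δ⟫ < ⟪R.ξ, β + δ⟫ := by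
    rw [inner_add_right]; linarith [hβ.2]
  have hβNN : R.IsNN β := by
    by_contra h
    have := hmin β ⟨hβ, h⟩
    linarith
  have hδNN : R.IsNN δ := by
    by_contra h
    have := hmin δ ⟨hδ, h⟩
    linarith
  exact hαn (R.isNN_add hβNN hδNN)

lemma simples_inner_nonpos {γ δ : V} (hγ : γ ∈ R.simples) (hδ : δ ∈ R.simples)
    (hne : γ ≠ δ) : ⟪γ, δ⟫ ≤ (0:ℝ) := by
  by_contra h
  push_neg at h
  have hδγ : δ ≠ -γ := by
    intro h'
    have := hδ.1.2
    rw [h', inner_neg_right] at this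
    linarith [hγ.1.2]
  have hsub : γ - δ ∈ R.Φ := R.sub_mem_of_inner_pos hγ.1.1 hδ.1.1 h hne hδγ
  rcases R.mem_pos_or_neg hsub with hp | hp
  · exact hγ.2 ⟨γ - δ, hp, δ, hδ.1, by abel⟩
  · rw [neg_sub] at hp
    exact hδ.2 ⟨δ - γ, hp, γ, hγ.1, by abel⟩

end Simples

end RootSystemData

namespace RootSystemData

section SimpleRefl

variable {V : Type*} [NormedAddCommGroup V] [InnerProductSpace ℝ V] (R : RootSystemData V)

lemma simples_subset_pos : R.simples ⊆ R.pos := fun _ h => h.1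

/-- A simple reflection permutes the positive roots other than (multiples of) itself. -/
lemma sRefl_simple_pos {γ α : V} (hγ : γ ∈ R.simples) (hα : α ∈ R.pos) (hne : α ≠ γ) :
    sRefl γ α ∈ R.pos := by
  classical
  have hγp : γ ∈ R.pos := hγ.1
  have hγΦ : γ ∈ R.Φ := hγp.1
  have hαΦ : α ∈ R.Φ := hα.1
  have hγ0 : γ ≠ 0 := R.nonzero γ hγΦ
  have hmem : sRefl γ α ∈ R.Φ := R.sRefl_root_mem hγΦ hαΦ
  set c : ℝ := 2 * ⟪α, γ⟫ / ⟪γ, γ⟫ with hc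
  have hsr : sRefl γ α = α - c • γ := sRefl_apply γ α
  have hξ : ⟪R.ξ, sRefl γ α⟫ = ⟪R.ξ, α⟫ - c * ⟪R.ξ, γ⟫ := by
    rw [hsr, inner_sub_right, real_inner_smul_right]
  rcases le_or_gt c 0 with hcle | hcpos
  · refine ⟨hmem, ?_⟩
    rw [hξ]
    nlinarith [hα.2, hγp.2]
  by_contra hnp
  rcases R.mem_pos_or_neg hmem with h | h
  · exact hnp h
  rw [hsr, neg_sub] at h
  -- β := c•γ - α is a positive root
  obtain ⟨n, hnsupp, hnsum⟩ := R.pos_isNN α hα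
  obtain ⟨m, hmsupp, hmsum⟩ := R.pos_isNN _ h
  set p : V →₀ ℕ := n + m with hp
  have hpsupp : ↑p.support ⊆ R.simples := by
    intro x hx
    rw [Finset.mem_coe, Finsupp.mem_support_iff, Finsupp.add_apply] at hx
    rcases Nat.eq_zero_or_pos (n x) with h0 | h0
    · exact hmsupp (Finsupp.mem_support_iff.mpr (by omega))
    · exact hnsupp (Finsupp.mem_support_iff.mpr (by omega))
  have hsum : (∑ δ ∈ p.support, (p δ : ℝ) • δ) = c • γ := by
    have : p.sum (fun δ k => (k : ℝ) • δ) = α + (c • γ - α) := by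
      rw [hp, Finsupp.sum_add_index']
      · rw [← hnsum, ← hmsum]
      · simp
      · intro δ k l; push_cast; rw [add_smul]
    rw [Finsupp.sum] at this
    rw [this]; abel
  -- find a simple root other than γ in the support of n
  have hδ₀ : ∃ δ₀ ∈ n.support, δ₀ ≠ γ := by
    by_contra hcon
    push_neg at hcon
    have hsub : n.support ⊆ {γ} := fun x hx => Finset.mem_singleton.mpr (hcon x hx)
    rcases Finset.subset_singleton_iff.mp hsub with h0 | h1
    · have hz : α = 0 := by rw [hnsum, Finsupp.sum, h0, Finset.sum_empty]
      exact R.nonzero α hαΦ hz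
    · have : α = (n γ : ℝ) • γ := by
        rw [hnsum, Finsupp.sum, h1, Finset.sum_singleton]
      rcases R.parallel_eq_or_neg hγΦ hαΦ _ this with rfl | rfl
      · exact hne rfl
      · have := hα.2
        rw [inner_neg_right] at this
        linarith [hγp.2]
  obtain ⟨δ₀, hδ₀n, hδ₀ne⟩ := hδ₀
  have hδ₀p : δ₀ ∈ p.support.erase γ := by
    refine Finset.mem_erase.mpr ⟨hδ₀ne, ?_⟩
    rw [Finsupp.mem_support_iff, Finsupp.add_apply]
    rw [Finsupp.mem_support_iff] at hδ₀n
    omega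
  have hsplit : (∑ δ ∈ p.support, (p δ : ℝ) • δ) =
      (∑ δ ∈ p.support.erase γ, (p δ : ℝ) • δ) + (p γ : ℝ) • γ := by
    by_cases hγs : γ ∈ p.support
    · rw [Finset.sum_erase_add _ _ hγs]
    · rw [Finset.erase_eq_of_notMem hγs]
      rw [Finsupp.notMem_support_iff.mp hγs]
      simp
  set t : ℝ := c - (p γ : ℝ) with ht
  have hteq : t • γ = ∑ δ ∈ p.support.erase γ, (p δ : ℝ) • δ := by
    rw [ht, sub_smul]
    rw [hsplit] at hsum
    rw [← hsum]; abel
  have hξt : t * ⟪R.ξ, γ⟫ = ∑ δ ∈ p.support.erase γ, (p δ : ℝ) * ⟪R.ξ, δ⟫ := by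
    have := congrArg (fun z => ⟪R.ξ, z⟫) hteq
    simpa [inner_sum, real_inner_smul_right] using this
  have hsum_pos : (0:ℝ) < ∑ δ ∈ p.support.erase γ, (p δ : ℝ) * ⟪R.ξ, δ⟫ := by
    refine Finset.sum_pos' ?_ ⟨δ₀, hδ₀p, ?_⟩
    · intro δ hδ
      have hδs : δ ∈ R.simples := hpsupp (Finset.mem_of_mem_erase hδ)
      have := hδs.1.2
      positivity
    · have hδs : δ₀ ∈ R.simples := hpsupp (Finset.mem_of_mem_erase hδ₀p)
      have h1 : (0:ℝ) < (p δ₀ : ℝ) := by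
        have := Finset.mem_of_mem_erase hδ₀p
        rw [Finsupp.mem_support_iff] at this
        exact_mod_cast Nat.pos_of_ne_zero this
      exact mul_pos h1 hδs.1.2
  have htpos : (0:ℝ) < t := by
    by_contra hle
    push_neg at hle
    have := mul_nonpos_of_nonpos_of_nonneg hle (le_of_lt hγp.2)
    rw [hξt] at this
    linarith
  have hγt : t * ⟪γ, γ⟫ = ∑ δ ∈ p.support.erase γ, (p δ : ℝ) * ⟪γ, δ⟫ := by
    have := congrArg (fun z => ⟪γ, z⟫) hteq
    simpa [inner_sum, real_inner_smul_right] using this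
  have hsum_nonpos : (∑ δ ∈ p.support.erase γ, (p δ : ℝ) * ⟪γ, δ⟫) ≤ 0 := by
    refine Finset.sum_nonpos ?_
    intro δ hδ
    have hδs : δ ∈ R.simples := hpsupp (Finset.mem_of_mem_erase hδ)
    have hδne : δ ≠ γ := (Finset.mem_erase.mp hδ).1
    have := R.simples_inner_nonpos hγ hδs (Ne.symm hδne)
    have hnn : (0:ℝ) ≤ (p δ : ℝ) := by positivity
    exact mul_nonpos_of_nonneg_of_nonpos hnn this
  have : (0:ℝ) < t * ⟪γ, γ⟫ := mul_pos htpos (R.inner_self_pos_of_mem hγΦ)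
  rw [hγt] at this
  linarith

end SimpleRefl

end RootSystemData

namespace RootSystemData

section Words

variable {V : Type*} [NormedAddCommGroup V] [InnerProductSpace ℝ V] (R : RootSystemData V)

lemma sRefl_neg (α : V) : sRefl (-α) = sRefl α := by
  ext x
  show sRefl (-α) x = sRefl α x
  rw [sRefl_apply, sRefl_apply, inner_neg_right, inner_neg_left, inner_neg_right, neg_neg]
  module

lemma sRefl_sq (α : V) : sRefl α * sRefl α = 1 := by
  ext x
  exact sRefl_invol α x

/-- Conjugation formula: `s_{uα} = u s_α u⁻¹`. -/
lemma sRefl_conj (u : V ≃ₗᵢ[ℝ] V) (α : V) : sRefl (u α) = u * sRefl α * u⁻¹ := by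
  ext x
  show sRefl (u α) x = u (sRefl α (u.symm x))
  rw [sRefl_apply, sRefl_apply, map_sub, map_smul]
  congr 2
  · exact (u.apply_symm_apply x).symm
  · rw [← u.inner_map_map (u.symm x) α, u.apply_symm_apply, ← u.inner_map_map α α]

/-- The set of simple reflections (as linear isometries). -/
def simpleRefls : Set (V ≃ₗᵢ[ℝ] V) := {s | ∃ γ ∈ R.simples, s = sRefl γ}

lemma sRefl_mem_W0 {α : V} (hα : α ∈ R.Φ) : sRefl α ∈ R.W0 := by
  apply Subgroup.subset_closure
  exact ⟨α, hα, fun x => sRefl_eq_reflPt α x⟩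

lemma W0_maps {u : V ≃ₗᵢ[ℝ] V} (hu : u ∈ R.W0) :
    (∀ β ∈ R.Φ, u β ∈ R.Φ) ∧ (∀ β ∈ R.Φ, u⁻¹ β ∈ R.Φ) := by
  induction hu using Subgroup.closure_induction with
  | mem f hf =>
    obtain ⟨α, hαΦ, hfx⟩ := hf
    have hfe : f = sRefl α := by
      ext x
      rw [hfx x, sRefl_eq_reflPt]
    subst hfe
    constructor
    · intro β hβ; exact R.sRefl_root_mem hαΦ hβ
    · intro β hβ
      rw [sRefl_inv]
      exact R.sRefl_root_mem hαΦ hβ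
  | one => exact ⟨fun β hβ => hβ, fun β hβ => hβ⟩
  | mul f g _ _ hf hg =>
    constructor
    · intro β hβ; exact hf.1 _ (hg.1 β hβ)
    · intro β hβ
      have : (f * g)⁻¹ β = g⁻¹ (f⁻¹ β) := rfl
      rw [this]
      exact hg.2 _ (hf.2 β hβ)
  | inv f _ hf => exact ⟨hf.2, by simpa using hf.1⟩

lemma exists_simple_inner_pos {α : V} (hα : α ∈ R.pos) :
    ∃ γ ∈ R.simples, (0:ℝ) < ⟪α, γ⟫ := by
  by_contra hcon
  push_neg at hcon
  obtain ⟨n, hnsupp, hnsum⟩ := R.pos_isNN α hα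
  have h1 : ⟪α, α⟫ = ∑ δ ∈ n.support, (n δ : ℝ) * ⟪α, δ⟫ := by
    have h0 : ⟪α, α⟫ = ⟪α, n.sum (fun δ k => (k:ℝ) • δ)⟫ := by rw [← hnsum]
    rw [h0, Finsupp.sum, inner_sum]
    exact Finset.sum_congr rfl fun δ _ => real_inner_smul_right α δ _
  have h2 : ⟪α, α⟫ ≤ 0 := by
    rw [h1]
    refine Finset.sum_nonpos fun δ hδ => ?_
    exact mul_nonpos_of_nonneg_of_nonpos (by positivity) (hcon δ (hnsupp hδ))
  linarith [R.inner_self_pos_of_mem hα.1]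

lemma sRefl_mem_closure_simples {α : V} (hα : α ∈ R.pos) :
    sRefl α ∈ Subgroup.closure R.simpleRefls := by
  by_contra hcon
  have hT : {β | β ∈ R.pos ∧ sRefl β ∉ Subgroup.closure R.simpleRefls}.Nonempty :=
    ⟨α, hα, hcon⟩
  have hTfin : {β | β ∈ R.pos ∧ sRefl β ∉ Subgroup.closure R.simpleRefls}.Finite :=
    R.pos_finite.subset fun x hx => hx.1
  obtain ⟨β, ⟨hβp, hβn⟩, hmin⟩ := Set.exists_min_image _ (fun β => ⟪R.ξ, β⟫) hTfin hT
  have hβs : β ∉ R.simples := fun h =>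
    hβn (Subgroup.subset_closure ⟨β, h, rfl⟩)
  obtain ⟨γ, hγs, hγin⟩ := R.exists_simple_inner_pos hβp
  have hβγ : β ≠ γ := fun h => hβs (h ▸ hγs)
  have hδ : sRefl γ β ∈ R.pos := R.sRefl_simple_pos hγs hβp hβγ
  have hγΦ : γ ∈ R.Φ := hγs.1.1
  have hγγ : (0:ℝ) < ⟪γ, γ⟫ := R.inner_self_pos_of_mem hγΦ
  have hξδ : ⟪R.ξ, sRefl γ β⟫ < ⟪R.ξ, β⟫ := by
    rw [sRefl_apply, inner_sub_right, real_inner_smul_right]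
    have hc : (0:ℝ) < 2 * ⟪β, γ⟫ / ⟪γ, γ⟫ := by
      have : (0:ℝ) < ⟪β, γ⟫ := hγin
      positivity
    nlinarith [hγs.1.2]
  have hδcl : sRefl (sRefl γ β) ∈ Subgroup.closure R.simpleRefls := by
    by_contra h
    have := hmin _ ⟨hδ, h⟩
    linarith
  have hγcl : sRefl γ ∈ Subgroup.closure R.simpleRefls :=
    Subgroup.subset_closure ⟨γ, hγs, rfl⟩
  have hconj : sRefl (sRefl γ β) = sRefl γ * sRefl β * (sRefl γ)⁻¹ := sRefl_conj (sRefl γ) β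
  have : sRefl β = (sRefl γ)⁻¹ * sRefl (sRefl γ β) * sRefl γ := by
    rw [hconj]; group
  rw [this] at hβn
  exact hβn (mul_mem (mul_mem (inv_mem hγcl) hδcl) hγcl)

lemma W0_le_closure_simples : R.W0 ≤ Subgroup.closure R.simpleRefls := by
  rw [W0]
  refine Subgroup.closure_le _ |>.mpr ?_
  rintro f ⟨α, hαΦ, hfx⟩
  have hfe : f = sRefl α := by
    ext x; rw [hfx x, sRefl_eq_reflPt]
  subst hfe
  rcases R.mem_pos_or_neg hαΦ with h | h
  · exact R.sRefl_mem_closure_simples h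
  · rw [← sRefl_neg]
    exact R.sRefl_mem_closure_simples h

lemma exists_word {u : V ≃ₗᵢ[ℝ] V} (hu : u ∈ R.W0) :
    ∃ L : List V, (∀ γ ∈ L, γ ∈ R.simples) ∧ u = (L.map sRefl).prod := by
  have hu' : u ∈ Subgroup.closure R.simpleRefls := R.W0_le_closure_simples hu
  clear hu
  induction hu' using Subgroup.closure_induction with
  | mem f hf =>
    obtain ⟨γ, hγ, rfl⟩ := hf
    exact ⟨[γ], by simpa using hγ, by simp⟩
  | one => exact ⟨[], by simp, by simp⟩
  | mul f g _ _ hf hg =>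
    obtain ⟨L₁, hL₁, rfl⟩ := hf
    obtain ⟨L₂, hL₂, rfl⟩ := hg
    refine ⟨L₁ ++ L₂, ?_, by rw [List.map_append, List.prod_append]⟩
    intro γ hγ
    rcases List.mem_append.mp hγ with h | h
    · exact hL₁ γ h
    · exact hL₂ γ h
  | inv f _ hf =>
    obtain ⟨L, hL, rfl⟩ := hf
    refine ⟨L.reverse, fun γ hγ => hL γ (List.mem_reverse.mp hγ), ?_⟩
    rw [List.prod_inv_reverse]
    rw [← List.map_reverse, ← List.map_reverse]
    congr 1
    rw [List.map_map]
    refine List.map_congr_left fun γ _ => ?_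
    show (sRefl γ)⁻¹ = sRefl γ
    exact sRefl_inv γ

lemma prod_mem_W0 {L : List V} (hL : ∀ γ ∈ L, γ ∈ R.Φ) : (L.map sRefl).prod ∈ R.W0 := by
  induction L with
  | nil => simp
  | cons γ L ih =>
    rw [List.map_cons, List.prod_cons]
    exact mul_mem (R.sRefl_mem_W0 (hL γ (by simp)))
      (ih fun δ hδ => hL δ (by simp [hδ]))

/-- Deletion lemma. -/
lemma deletion : ∀ L : List V, (∀ γ ∈ L, γ ∈ R.simples) → ∀ β ∈ R.pos,
    (L.map sRefl).prod β ∉ R.pos →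
    ∃ L' : List V, (∀ γ ∈ L', γ ∈ R.simples) ∧ L'.length + 1 = L.length ∧
      (L.map sRefl).prod * sRefl β = (L'.map sRefl).prod := by
  intro L
  induction L with
  | nil =>
    intro _ β hβ hneg
    simp only [List.map_nil, List.prod_nil] at hneg
    exact absurd hβ (by simpa using hneg)
  | cons γ L ih =>
    intro hLs β hβ hneg
    have hγs : γ ∈ R.simples := hLs γ (by simp)
    have hLs' : ∀ δ ∈ L, δ ∈ R.simples := fun δ hδ => hLs δ (by simp [hδ])
    set v := (L.map sRefl).prod with hv
    have hprod : ((γ :: L).map sRefl).prod = sRefl γ * v := by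
      rw [List.map_cons, List.prod_cons]
    by_cases hvβ : v β ∈ R.pos
    · -- v β = γ
      have h1 : sRefl γ (v β) ∉ R.pos := by
        rw [hprod] at hneg
        exact hneg
      have h2 : v β = γ := by
        by_contra h
        exact h1 (R.sRefl_simple_pos hγs hvβ h)
      have hconj : sRefl γ = v * sRefl β * v⁻¹ := by
        rw [← h2]; exact sRefl_conj v β
      refine ⟨L, hLs', by simp, ?_⟩
      rw [hprod, hconj]
      have hsq : sRefl β * sRefl β = 1 := sRefl_sq β
      calc v * sRefl β * v⁻¹ * v * sRefl β = v * (sRefl β * sRefl β) := by group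
        _ = v := by rw [hsq, mul_one]
    · obtain ⟨L', hL's, hlen, heq⟩ := ih hLs' β hβ hvβ
      refine ⟨γ :: L', fun δ hδ => ?_, by simp [← hlen], ?_⟩
      · rcases List.mem_cons.mp hδ with rfl | h
        · exact hγs
        · exact hL's δ h
      · rw [hprod, List.map_cons, List.prod_cons, ← heq, mul_assoc]

lemma eq_one_of_preserves_pos_aux :
    ∀ n : ℕ, ∀ L : List V, L.length ≤ n → (∀ γ ∈ L, γ ∈ R.simples) →
    (∀ β ∈ R.pos, (L.map sRefl).prod β ∈ R.pos) → (L.map sRefl).prod = 1 := by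
  intro n
  induction n with
  | zero =>
    intro L hlen _ _
    rw [List.length_eq_zero_iff.mp (Nat.le_zero.mp hlen)]
    simp
  | succ n ih =>
    intro L hlen hLs hpres
    rcases List.eq_nil_or_concat L with rfl | ⟨L₁, γ, rfl⟩
    · simp
    have hγs : γ ∈ R.simples := hLs γ (by simp [List.concat_eq_append])
    have hL₁s : ∀ δ ∈ L₁, δ ∈ R.simples := fun δ hδ =>
      hLs δ (by simp [List.concat_eq_append, hδ])
    have hγ0 : γ ≠ 0 := R.nonzero γ hγs.1.1
    have hprod : ((L₁.concat γ).map sRefl).prod = (L₁.map sRefl).prod * sRefl γ := by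
      rw [List.concat_eq_append, List.map_append, List.prod_append]
      simp
    have huγ : ((L₁.concat γ).map sRefl).prod γ ∈ R.pos := hpres γ hγs.1
    have hneg : (L₁.map sRefl).prod γ ∉ R.pos := by
      have h1 : ((L₁.concat γ).map sRefl).prod γ = (L₁.map sRefl).prod (sRefl γ γ) := by
        rw [hprod]; rfl
      rw [sRefl_self γ hγ0, map_neg] at h1
      intro h
      have : -((L₁.map sRefl).prod γ) ∉ R.pos := R.not_neg_pos h
      rw [← h1] at this
      exact this huγ
    obtain ⟨L', hL's, hlen', heq⟩ := R.deletion L₁ hL₁s γ hγs.1 hneg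
    have heq2 : ((L₁.concat γ).map sRefl).prod = (L'.map sRefl).prod := by
      rw [hprod, heq]
    rw [heq2]
    refine ih L' ?_ hL's ?_
    · have h5 : (L₁.concat γ).length = L₁.length + 1 := by simp
      omega
    · intro β hβ
      rw [← heq2]
      exact hpres β hβ

/-- **Theorem T**: an element of the finite Weyl group preserving the positive system
is the identity. -/
lemma eq_one_of_preserves_pos {u : V ≃ₗᵢ[ℝ] V} (hu : u ∈ R.W0)
    (hpos : ∀ β ∈ R.pos, u β ∈ R.pos) : u = 1 := by
  obtain ⟨L, hLs, rfl⟩ := R.exists_word hu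
  exact R.eq_one_of_preserves_pos_aux L.length L le_rfl hLs hpos

end Words

end RootSystemData

namespace RootSystemData

section Geometry

variable {V : Type*} [NormedAddCommGroup V] [InnerProductSpace ℝ V] (R : RootSystemData V)

/-- Two hyperplanes with the same underlying set have proportional data. -/
lemma plane_eq_aux {α β : V} (hα : α ≠ 0) {c d : ℝ}
    (h : {x : V | ⟪x, α⟫ = c} = {x : V | ⟪x, β⟫ = d}) :
    ∃ lam : ℝ, β = lam • α ∧ d = lam * c := by
  have hA : (0:ℝ) < ⟪α, α⟫ := real_inner_self_pos' hα
  set lam : ℝ := ⟪β, α⟫ / ⟪α, α⟫ with hlam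
  set p : V := (c / ⟪α, α⟫) • α with hp
  have hpα : ⟪p, α⟫ = c := by
    rw [hp, real_inner_smul_left]; field_simp
  have hpβ : ⟪p, β⟫ = d := by
    have : p ∈ {x : V | ⟪x, β⟫ = d} := h ▸ hpα
    exact this
  have hperp : ∀ v : V, ⟪v, α⟫ = 0 → ⟪v, β⟫ = 0 := by
    intro v hv
    have h1 : ⟪p + v, α⟫ = c := by rw [inner_add_left, hv, hpα, add_zero]
    have h2 : p + v ∈ {x : V | ⟪x, β⟫ = d} := h ▸ h1
    have h3 : ⟪p + v, β⟫ = d := h2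
    rw [inner_add_left, hpβ] at h3
    linarith
  have hvα : ⟪β - lam • α, α⟫ = 0 := by
    rw [inner_sub_left, real_inner_smul_left, hlam]
    field_simp
    ring
  have hvβ : ⟪β - lam • α, β⟫ = 0 := hperp _ hvα
  have hvv : ⟪β - lam • α, β - lam • α⟫ = (0:ℝ) := by
    rw [inner_sub_right, real_inner_smul_right, hvβ, hvα, mul_zero, sub_zero]
  have hβ : β = lam • α := sub_eq_zero.mp (inner_self_eq_zero.mp hvv)
  refine ⟨lam, hβ, ?_⟩
  rw [← hpβ, hβ, real_inner_smul_right, hpα]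

/-- Equal affine root hyperplanes have equal or opposite data. -/
lemma hyp_eq_hyp {α β : V} (hα : α ∈ R.Φ) (hβ : β ∈ R.Φ) {k l : ℤ}
    (h : R.hyp α k = R.hyp β l) : (β = α ∧ l = k) ∨ (β = -α ∧ l = -k) := by
  obtain ⟨lam, hβα, hdc⟩ := plane_eq_aux (R.nonzero α hα) h
  rcases R.parallel_eq_or_neg hα hβ lam hβα with h1 | h1
  · left
    refine ⟨h1, ?_⟩
    have hlam : lam = 1 := by
      by_contra hne
      have : β = lam • α := hβα
      rw [h1] at this
      have h2 : (lam - 1) • α = 0 := by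
        rw [sub_smul, one_smul, ← this, sub_self]
      rcases smul_eq_zero.mp h2 with h3 | h3
      · exact hne (by linarith [sub_eq_zero.mp h3])
      · exact R.nonzero α hα h3
    rw [hlam, one_mul] at hdc
    exact_mod_cast hdc
  · right
    refine ⟨h1, ?_⟩
    have hlam : lam = -1 := by
      by_contra hne
      rw [h1] at hβα
      have h2 : (lam + 1) • α = 0 := by
        rw [add_smul, one_smul, ← hβα]
        abel
      rcases smul_eq_zero.mp h2 with h3 | h3
      · exact hne (by linarith [eq_neg_of_add_eq_zero_left h3])
      · exact R.nonzero α hα h3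
    rw [hlam] at hdc
    have : (l:ℝ) = -(k:ℝ) := by rw [hdc]; ring
    exact_mod_cast this

/-- The set of separating hyperplanes. -/
def sepSet (X Y : Set V) : Set (Set V) := {H : Set V | R.IsHyp H ∧ R.Separates H X Y}

lemma dist_eq_sepSet (X Y : Set V) : R.dist X Y = (R.sepSet X Y).ncard := rfl

lemma sep_symm {H X Y : Set V} (h : R.Separates H X Y) : R.Separates H Y X := by
  obtain ⟨β, hβ, k, hH, hs⟩ := h
  exact ⟨β, hβ, k, hH, hs.symm⟩

lemma sepSet_symm (X Y : Set V) : R.sepSet X Y = R.sepSet Y X := by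
  ext H
  exact ⟨fun h => ⟨h.1, R.sep_symm h.2⟩, fun h => ⟨h.1, R.sep_symm h.2⟩⟩

/-- `X` lies within an open unit band between consecutive integers, for every root. -/
def Banded (X : Set V) : Prop :=
  ∀ α ∈ R.Φ, ∃ m : ℤ, ∀ x ∈ X, (m:ℝ) < ⟪x, α⟫ ∧ ⟪x, α⟫ < m + 1

lemma baseAlcove_banded : R.Banded R.baseAlcove := by
  intro α hα
  rcases R.mem_pos_or_neg hα with h | h
  · exact ⟨0, fun x hx => by simpa using hx α h⟩
  · refine ⟨-1, fun x hx => ?_⟩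
    have := hx (-α) h
    rw [inner_neg_right] at this
    constructor
    · push_cast; linarith [this.2]
    · push_cast; linarith [this.1]

/-- Admissible affine transformations: translation part has integral pairings with roots,
linear part is an isometry permuting the roots. -/
def Adm (h : V ≃ᵃ[ℝ] V) : Prop :=
  ∃ (w : V) (u : V ≃ₗᵢ[ℝ] V), (∀ β ∈ R.Φ, u β ∈ R.Φ) ∧ (∀ β ∈ R.Φ, u.symm β ∈ R.Φ) ∧
    (∀ β ∈ R.Φ, ∃ n : ℤ, ⟪w, β⟫ = (n:ℝ)) ∧ ∀ x, h x = w + u x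

lemma adm_banded {h : V ≃ᵃ[ℝ] V} (hh : R.Adm h) {X : Set V} (hX : R.Banded X) :
    R.Banded (⇑h '' X) := by
  obtain ⟨w, u, hu1, hu2, hw, hhx⟩ := hh
  intro α hα
  obtain ⟨m, hm⟩ := hX (u.symm α) (hu2 α hα)
  obtain ⟨n, hn⟩ := hw α hα
  refine ⟨m + n, ?_⟩
  rintro _ ⟨x, hx, rfl⟩
  have key : ⟪h x, α⟫ = ⟪w, α⟫ + ⟪x, u.symm α⟫ := by
    rw [hhx x, inner_add_left]
    congr 1
    rw [← u.inner_map_map x (u.symm α), u.apply_symm_apply]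
  rw [key, hn]
  obtain ⟨h1, h2⟩ := hm x hx
  constructor
  · push_cast; linarith
  · push_cast; linarith

lemma claimA {X Y Z : Set V} (hY : R.Banded Y) :
    R.sepSet X Z ⊆ R.sepSet X Y ∪ R.sepSet Y Z := by
  rintro H ⟨hhyp, β, hβ, k, rfl, hsides⟩
  obtain ⟨m, hm⟩ := hY β hβ
  rcases hsides with ⟨hX, hZ⟩ | ⟨hZ, hX⟩
  · rcases le_or_gt (k:ℝ) (m:ℝ) with hkm | hkm
    · left
      exact ⟨hhyp, β, hβ, k, rfl, Or.inl ⟨hX, fun y hy => lt_of_le_of_lt hkm (hm y hy).1⟩⟩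
    · right
      have hmk : m + 1 ≤ k := by
        have : m < k := by exact_mod_cast hkm
        omega
      have hk : (m:ℝ) + 1 ≤ (k:ℝ) := by exact_mod_cast hmk
      exact ⟨hhyp, β, hβ, k, rfl, Or.inl ⟨fun y hy => lt_of_lt_of_le (hm y hy).2 hk, hZ⟩⟩
  · rcases le_or_gt (k:ℝ) (m:ℝ) with hkm | hkm
    · right
      exact ⟨hhyp, β, hβ, k, rfl, Or.inr ⟨hZ, fun y hy => lt_of_le_of_lt hkm (hm y hy).1⟩⟩
    · left
      have hmk : m + 1 ≤ k := by
        have : m < k := by exact_mod_cast hkm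
        omega
      have hk : (m:ℝ) + 1 ≤ (k:ℝ) := by exact_mod_cast hmk
      exact ⟨hhyp, β, hβ, k, rfl, Or.inr ⟨fun y hy => lt_of_lt_of_le (hm y hy).2 hk, hX⟩⟩

lemma sepSet_finite {X Y : Set V} (hX : X.Nonempty) (hY : Y.Nonempty) :
    (R.sepSet X Y).Finite := by
  obtain ⟨x₀, hx₀⟩ := hX
  obtain ⟨y₀, hy₀⟩ := hY
  have hsub : R.sepSet X Y ⊆
      ⋃ β ∈ R.Φ, (fun k : ℤ => R.hyp β k) ''
        {k : ℤ | min ⟪x₀, β⟫ ⟪y₀, β⟫ < (k:ℝ) ∧ (k:ℝ) < max ⟪x₀, β⟫ ⟪y₀, β⟫} := by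
    rintro H ⟨hhyp, β, hβ, k, rfl, hsides⟩
    refine Set.mem_biUnion hβ ?_
    refine ⟨k, ?_, rfl⟩
    rcases hsides with ⟨h1, h2⟩ | ⟨h1, h2⟩
    · exact ⟨lt_of_le_of_lt (min_le_left _ _) (h1 x₀ hx₀),
        lt_of_lt_of_le (h2 y₀ hy₀) (le_max_right _ _)⟩
    · exact ⟨lt_of_le_of_lt (min_le_right _ _) (h1 y₀ hy₀),
        lt_of_lt_of_le (h2 x₀ hx₀) (le_max_left _ _)⟩
  refine Set.Finite.subset ?_ hsub
  refine Set.Finite.biUnion R.finite fun β _ => Set.Finite.image _ ?_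
  refine Set.Finite.subset (Set.finite_Icc ⌈min ⟪x₀, β⟫ ⟪y₀, β⟫⌉ ⌊max ⟪x₀, β⟫ ⟪y₀, β⟫⌋) ?_
  rintro k ⟨h1, h2⟩
  exact Set.mem_Icc.mpr ⟨Int.ceil_le.mpr (le_of_lt h1), Int.le_floor.mpr (le_of_lt h2)⟩

lemma adm_inv {h : V ≃ᵃ[ℝ] V} (hh : R.Adm h) : R.Adm h⁻¹ := by
  obtain ⟨w, u, hu1, hu2, hw, hhx⟩ := hh
  refine ⟨-u.symm w, u.symm, hu2, by simpa using hu1, ?_, ?_⟩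
  · intro β hβ
    obtain ⟨n, hn⟩ := hw (u β) (hu1 β hβ)
    refine ⟨-n, ?_⟩
    rw [inner_neg_left]
    rw [← u.inner_map_map (u.symm w) β, u.apply_symm_apply, hn]
    push_cast; ring
  · intro x
    apply h.injective
    have h1 : h (h⁻¹ x) = x := h.apply_symm_apply x
    rw [h1, hhx]
    rw [map_add, map_neg, u.apply_symm_apply, u.apply_symm_apply]
    abel

lemma adm_image_hyp {h : V ≃ᵃ[ℝ] V} {w : V} {u : V ≃ₗᵢ[ℝ] V}
    (hhx : ∀ x, h x = w + u x) {β : V} {k : ℤ} {n : ℤ} (hn : ⟪w, u β⟫ = (n:ℝ)) :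
    ⇑h '' R.hyp β k = R.hyp (u β) (k + n) := by
  ext y
  constructor
  · rintro ⟨x, hx, rfl⟩
    show ⟪h x, u β⟫ = ((k + n : ℤ):ℝ)
    rw [hhx x, inner_add_left, u.inner_map_map, hn]
    have hxk : ⟪x, β⟫ = (k:ℝ) := hx
    rw [hxk]; push_cast; ring
  · intro hy
    have hy' : ⟪y, u β⟫ = ((k:ℝ) + (n:ℝ)) := by
      have : ⟪y, u β⟫ = ((k + n : ℤ):ℝ) := hy
      rw [this]; push_cast; ring
    refine ⟨u.symm (y - w), ?_, ?_⟩
    · show ⟪u.symm (y - w), β⟫ = (k:ℝ)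
      rw [← u.inner_map_map (u.symm (y-w)) β, u.apply_symm_apply, inner_sub_left, hn]
      linarith
    · rw [hhx, u.apply_symm_apply]; abel

lemma adm_sep {h : V ≃ᵃ[ℝ] V} (hh : R.Adm h) {H X Y : Set V}
    (hs : R.Separates H X Y) : R.Separates (⇑h '' H) (⇑h '' X) (⇑h '' Y) := by
  obtain ⟨w, u, hu1, hu2, hw, hhx⟩ := hh
  obtain ⟨β, hβ, k, rfl, hsides⟩ := hs
  obtain ⟨n, hn⟩ := hw (u β) (hu1 β hβ)
  refine ⟨u β, hu1 β hβ, k + n, R.adm_image_hyp hhx hn, ?_⟩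
  have key : ∀ x : V, ⟪h x, u β⟫ = ⟪x, β⟫ + (n:ℝ) := by
    intro x
    rw [hhx x, inner_add_left, u.inner_map_map, hn]; ring
  rcases hsides with ⟨h1, h2⟩ | ⟨h1, h2⟩
  · refine Or.inl ⟨?_, ?_⟩
    · rintro _ ⟨x, hx, rfl⟩
      rw [key]; push_cast
      linarith [h1 x hx]
    · rintro _ ⟨y, hy, rfl⟩
      rw [key]; push_cast
      linarith [h2 y hy]
  · refine Or.inr ⟨?_, ?_⟩
    · rintro _ ⟨y, hy, rfl⟩
      rw [key]; push_cast
      linarith [h1 y hy]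
    · rintro _ ⟨x, hx, rfl⟩
      rw [key]; push_cast
      linarith [h2 x hx]

lemma adm_isHyp {h : V ≃ᵃ[ℝ] V} (hh : R.Adm h) {H : Set V}
    (hH : R.IsHyp H) : R.IsHyp (⇑h '' H) := by
  obtain ⟨w, u, hu1, hu2, hw, hhx⟩ := hh
  obtain ⟨β, hβ, k, rfl⟩ := hH
  obtain ⟨n, hn⟩ := hw (u β) (hu1 β hβ)
  exact ⟨u β, hu1 β hβ, k + n, R.adm_image_hyp hhx hn⟩

lemma image_image_inv (h : V ≃ᵃ[ℝ] V) (X : Set V) : ⇑h⁻¹ '' (⇑h '' X) = X := by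
  rw [Set.image_image]
  have heq : (fun x => h⁻¹ (h x)) = fun x : V => x := by
    funext x
    show h.symm (h x) = x
    exact h.symm_apply_apply x
  rw [heq, Set.image_id']

lemma adm_sepSet_image {h : V ≃ᵃ[ℝ] V} (hh : R.Adm h) (X Y : Set V) :
    R.sepSet (⇑h '' X) (⇑h '' Y) = (Set.image ⇑h) '' R.sepSet X Y := by
  apply Set.Subset.antisymm
  · intro H' hH'
    have hinv := R.adm_inv hh
    refine ⟨⇑h⁻¹ '' H', ?_, ?_⟩
    · have h1 : R.IsHyp (⇑h⁻¹ '' H') := R.adm_isHyp hinv hH'.1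
      have h2 := R.adm_sep hinv hH'.2
      rw [image_image_inv h X, image_image_inv h Y] at h2
      exact ⟨h1, h2⟩
    · have : ⇑h '' (⇑h⁻¹ '' H') = H' := by
        have := image_image_inv h⁻¹ H'
        rwa [inv_inv] at this
      exact this
  · rintro _ ⟨H, hH, rfl⟩
    exact ⟨R.adm_isHyp hh hH.1, R.adm_sep hh hH.2⟩

lemma adm_dist {h : V ≃ᵃ[ℝ] V} (hh : R.Adm h) (X Y : Set V) :
    R.dist (⇑h '' X) (⇑h '' Y) = R.dist X Y := by
  rw [dist_eq_sepSet, dist_eq_sepSet, R.adm_sepSet_image hh]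
  exact Set.ncard_image_of_injective _ (Set.image_injective.mpr h.injective)

end Geometry

end RootSystemData

namespace RootSystemData

section Walls

variable {V : Type*} [NormedAddCommGroup V] [InnerProductSpace ℝ V] (R : RootSystemData V)

lemma baseAlcove_nonempty : R.baseAlcove.Nonempty := by
  have hfin : ((fun α => ⟪R.ξ, α⟫) '' R.pos).Finite := (R.pos_finite).image _
  obtain ⟨B, hB⟩ := hfin.bddAbove
  set B' : ℝ := max B 1 with hB'
  have hB'pos : (0:ℝ) < B' := lt_of_lt_of_le one_pos (le_max_right _ _)
  refine ⟨(1 / (B' + 1)) • R.ξ, ?_⟩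
  intro α hα
  have hξα : (0:ℝ) < ⟪R.ξ, α⟫ := hα.2
  have hle : ⟪R.ξ, α⟫ ≤ B' := by
    have : ⟪R.ξ, α⟫ ∈ (fun α => ⟪R.ξ, α⟫) '' R.pos := ⟨α, hα, rfl⟩
    exact le_trans (hB this) (le_max_left _ _)
  rw [real_inner_smul_left]
  constructor
  · positivity
  · rw [div_mul_eq_mul_div, one_mul, div_lt_one (by positivity)]
    linarith

/-- Reflections are self-adjoint. -/
lemma inner_sRefl (γ x y : V) : ⟪sRefl γ x, y⟫ = ⟪x, sRefl γ y⟫ := by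
  rw [sRefl_apply, sRefl_apply, inner_sub_left, inner_sub_right, real_inner_smul_left,
    real_inner_smul_right, real_inner_comm γ y]
  ring

lemma inner_sRefl_self (γ x : V) (hγ : γ ≠ 0) : ⟪sRefl γ x, γ⟫ = -⟪x, γ⟫ := by
  have hA : ⟪γ, γ⟫ ≠ (0:ℝ) := ne_of_gt (real_inner_self_pos' hγ)
  rw [sRefl_apply, inner_sub_left, real_inner_smul_left]
  field_simp
  ring

lemma hyp_neg (γ : V) (k : ℤ) : R.hyp (-γ) (-k) = R.hyp γ k := by
  ext x
  show ⟪x, -γ⟫ = ((-k : ℤ):ℝ) ↔ ⟪x, γ⟫ = (k:ℝ)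
  rw [inner_neg_right]
  push_cast
  constructor <;> intro h <;> linarith

lemma hyp_neg_zero (γ : V) : R.hyp (-γ) 0 = R.hyp γ 0 := by
  have := R.hyp_neg γ 0
  simpa using this

lemma sep_band_bounds {X Y : Set V} {β : V} {mX mY k : ℤ}
    (hX : ∀ x ∈ X, (mX:ℝ) < ⟪x, β⟫ ∧ ⟪x, β⟫ < mX + 1)
    (hY : ∀ y ∈ Y, (mY:ℝ) < ⟪y, β⟫ ∧ ⟪y, β⟫ < mY + 1)
    (hXne : X.Nonempty) (hYne : Y.Nonempty)
    (hs : ((∀ x ∈ X, ⟪x, β⟫ < (k:ℝ)) ∧ (∀ y ∈ Y, (k:ℝ) < ⟪y, β⟫)) ∨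
      ((∀ y ∈ Y, ⟪y, β⟫ < (k:ℝ)) ∧ (∀ x ∈ X, (k:ℝ) < ⟪x, β⟫))) :
    (mX < k ∧ k ≤ mY) ∨ (mY < k ∧ k ≤ mX) := by
  obtain ⟨a, ha⟩ := hXne
  obtain ⟨b, hb⟩ := hYne
  obtain ⟨ha1, ha2⟩ := hX a ha
  obtain ⟨hb1, hb2⟩ := hY b hb
  rcases hs with ⟨h1, h2⟩ | ⟨h1, h2⟩
  · left
    constructor
    · have : (mX:ℝ) < k := lt_trans ha1 (h1 a ha)
      exact_mod_cast this
    · have : (k:ℝ) < mY + 1 := lt_trans (h2 b hb) hb2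
      have : k < mY + 1 := by exact_mod_cast this
      omega
  · right
    constructor
    · have : (mY:ℝ) < k := lt_trans hb1 (h1 b hb)
      exact_mod_cast this
    · have : (k:ℝ) < mX + 1 := lt_trans (h2 a ha) ha2
      have : k < mX + 1 := by exact_mod_cast this
      omega

lemma baseAlcove_band_pos {β : V} (hβ : β ∈ R.pos) :
    ∀ x ∈ R.baseAlcove, ((0:ℤ):ℝ) < ⟪x, β⟫ ∧ ⟪x, β⟫ < (0:ℤ) + 1 := by
  intro x hx
  have := hx β hβ
  push_cast
  exact ⟨this.1, by linarith [this.2]⟩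

lemma baseAlcove_band_neg {β : V} (hβ : -β ∈ R.pos) :
    ∀ x ∈ R.baseAlcove, ((-1:ℤ):ℝ) < ⟪x, β⟫ ∧ ⟪x, β⟫ < (-1:ℤ) + 1 := by
  intro x hx
  have := hx (-β) hβ
  rw [inner_neg_right] at this
  push_cast
  exact ⟨by linarith [this.2], by linarith [this.1]⟩

lemma sRefl_image_band {γ β : V} {m : ℤ}
    (hband : ∀ x ∈ R.baseAlcove, (m:ℝ) < ⟪x, sRefl γ β⟫ ∧ ⟪x, sRefl γ β⟫ < m + 1) :
    ∀ y ∈ sRefl γ '' R.baseAlcove, (m:ℝ) < ⟪y, β⟫ ∧ ⟪y, β⟫ < m + 1 := by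
  rintro _ ⟨x, hx, rfl⟩
  rw [inner_sRefl]
  exact hband x hx

/-- The hyperplane `H_{γ,0}` for a simple root `γ` is the unique hyperplane separating the
base alcove from its reflection. -/
lemma wall_sepSet {γ : V} (hγ : γ ∈ R.simples) :
    R.sepSet R.baseAlcove (sRefl γ '' R.baseAlcove) = {R.hyp γ 0} := by
  have hγp : γ ∈ R.pos := hγ.1
  have hγΦ : γ ∈ R.Φ := hγp.1
  have hγ0 : γ ≠ 0 := R.nonzero γ hγΦ
  have hAne : R.baseAlcove.Nonempty := R.baseAlcove_nonempty
  have hsAne : (sRefl γ '' R.baseAlcove).Nonempty := hAne.image _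
  apply Set.Subset.antisymm
  · rintro H ⟨hhyp, β, hβ, k, rfl, hsides⟩
    -- compute the bands of the two alcoves with respect to β
    have hsβΦ : sRefl γ β ∈ R.Φ := R.sRefl_root_mem hγΦ hβ
    by_cases hβγ : β = γ
    · subst hβγ
      have hb1 := R.baseAlcove_band_pos hγp
      have hsγ : sRefl β β = -β := sRefl_self β hγ0
      have hb2 : ∀ y ∈ sRefl β '' R.baseAlcove, ((-1:ℤ):ℝ) < ⟪y, β⟫ ∧ ⟪y, β⟫ < (-1:ℤ) + 1 := by
        refine R.sRefl_image_band ?_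
        intro x hx
        rw [hsγ, inner_neg_right]
        have := hx β hγp
        push_cast
        exact ⟨by linarith [this.2], by linarith [this.1]⟩
      have := sep_band_bounds hb1 hb2 hAne hsAne hsides
      have hk0 : k = 0 := by omega
      subst hk0
      rfl
    by_cases hβγ' : β = -γ
    · subst hβγ'
      have hb1 := R.baseAlcove_band_neg (by rwa [neg_neg] : -(-γ) ∈ R.pos)
      have hb2 : ∀ y ∈ sRefl γ '' R.baseAlcove, ((0:ℤ):ℝ) < ⟪y, -γ⟫ ∧ ⟪y, -γ⟫ < (0:ℤ) + 1 := by
        refine R.sRefl_image_band ?_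
        intro x hx
        have hsγ : sRefl γ (-γ) = γ := by
          rw [map_neg, sRefl_self γ hγ0, neg_neg]
        rw [hsγ]
        have := hx γ hγp
        push_cast
        exact ⟨this.1, by linarith [this.2]⟩
      have := sep_band_bounds hb1 hb2 hAne hsAne hsides
      have hk0 : k = 0 := by omega
      subst hk0
      exact Set.mem_singleton_iff.mpr (R.hyp_neg_zero γ)
    · -- β is not ±γ : both alcoves lie in the same band
      exfalso
      rcases R.mem_pos_or_neg hβ with hp | hp
      · have hb1 := R.baseAlcove_band_pos hp
        have hsp : sRefl γ β ∈ R.pos := R.sRefl_simple_pos hγ hp hβγ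
        have hb2 : ∀ y ∈ sRefl γ '' R.baseAlcove, ((0:ℤ):ℝ) < ⟪y, β⟫ ∧ ⟪y, β⟫ < (0:ℤ) + 1 :=
          R.sRefl_image_band (R.baseAlcove_band_pos hsp)
        have := sep_band_bounds hb1 hb2 hAne hsAne hsides
        omega
      · have hb1 := R.baseAlcove_band_neg hp
        have hnβγ : -β ≠ γ := fun h => hβγ' (by rw [← h, neg_neg])
        have hsp : sRefl γ (-β) ∈ R.pos := R.sRefl_simple_pos hγ hp hnβγ
        have hb2 : ∀ y ∈ sRefl γ '' R.baseAlcove, ((-1:ℤ):ℝ) < ⟪y, β⟫ ∧ ⟪y, β⟫ < (-1:ℤ) + 1 := by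
          refine R.sRefl_image_band ?_
          intro x hx
          have h1 : sRefl γ β = -(sRefl γ (-β)) := by rw [map_neg, neg_neg]
          rw [h1, inner_neg_right]
          have := R.baseAlcove_band_pos hsp x hx
          push_cast
          push_cast at this
          exact ⟨by linarith [this.2], by linarith [this.1]⟩
        have := sep_band_bounds hb1 hb2 hAne hsAne hsides
        omega
  · rintro H rfl
    refine ⟨⟨γ, hγΦ, 0, rfl⟩, γ, hγΦ, 0, rfl, Or.inr ⟨?_, ?_⟩⟩
    · rintro _ ⟨x, hx, rfl⟩
      rw [inner_sRefl_self γ x hγ0]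
      have := (hx γ hγp).1
      push_cast
      linarith
    · intro x hx
      have := (hx γ hγp).1
      push_cast
      linarith

end Walls

end RootSystemData

namespace RootSystemData

section Moves

variable {V : Type*} [NormedAddCommGroup V] [InnerProductSpace ℝ V] (R : RootSystemData V)

/-- The affine version of a linear reflection. -/
noncomputable def sAff (γ : V) : V ≃ᵃ[ℝ] V := (sRefl γ).toLinearEquiv.toAffineEquiv

lemma coe_sAff (γ : V) : ⇑(sAff γ : V ≃ᵃ[ℝ] V) = ⇑(sRefl γ) := rfl

lemma sAff_ptwise (γ : V) : ∀ x, (sAff γ) x = (0:V) + sRefl γ x := fun x => (zero_add _).symm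

lemma sAff_adm {γ : V} (hγΦ : γ ∈ R.Φ) : R.Adm (sAff γ) := by
  refine ⟨0, sRefl γ, fun β hβ => R.sRefl_root_mem hγΦ hβ, fun β hβ => ?_, fun β hβ => ⟨0, by simp⟩,
    sAff_ptwise γ⟩
  rw [sRefl_symm]
  exact R.sRefl_root_mem hγΦ hβ

lemma sRefl_image_hyp_self {γ : V} (hγΦ : γ ∈ R.Φ) :
    ⇑(sRefl γ) '' R.hyp γ 0 = R.hyp γ 0 := by
  have hγ0 : γ ≠ 0 := R.nonzero γ hγΦ
  have hn : ⟪(0:V), sRefl γ γ⟫ = ((0:ℤ):ℝ) := by simp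
  have h := R.adm_image_hyp (sAff_ptwise γ) (k := 0) hn
  rw [coe_sAff] at h
  rw [h, sRefl_self γ hγ0]
  have : (0 + 0 : ℤ) = 0 := by ring
  rw [this, R.hyp_neg_zero]

lemma move1 {γ : V} (hγ : γ ∈ R.simples) {Y : Set V} (hYc : Y ⊆ R.chamber)
    (hYb : R.Banded Y) (hYne : Y.Nonempty) :
    R.dist R.baseAlcove Y < R.dist R.baseAlcove (⇑(sRefl γ) '' Y) := by
  have hγp : γ ∈ R.pos := hγ.1
  have hγΦ : γ ∈ R.Φ := hγp.1
  have hγ0 : γ ≠ 0 := R.nonzero γ hγΦ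
  have hAne : R.baseAlcove.Nonempty := R.baseAlcove_nonempty
  obtain ⟨a, ha⟩ := hAne
  obtain ⟨y₀, hy₀⟩ := hYne
  have hinj : Function.Injective (Set.image ⇑(sRefl γ)) :=
    Set.image_injective.mpr (sRefl γ).injective
  -- H_{γ,0} does not separate the base alcove from Y
  have hnotin : R.hyp γ 0 ∉ R.sepSet R.baseAlcove Y := by
    rintro ⟨-, β, hβ, k, hHeq, hsides⟩
    have hay : (0:ℝ) < ⟪a, γ⟫ := (ha γ hγp).1
    have hyy : (0:ℝ) < ⟪y₀, γ⟫ := hYc hy₀ γ hγp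
    rcases R.hyp_eq_hyp hγΦ hβ hHeq with ⟨rfl, rfl⟩ | ⟨rfl, rfl⟩
    · rcases hsides with ⟨h1, -⟩ | ⟨h1, -⟩
      · have := h1 a ha; push_cast at this; linarith
      · have := h1 y₀ hy₀; push_cast at this; linarith
    · rcases hsides with ⟨-, h2⟩ | ⟨-, h2⟩
      · have := h2 y₀ hy₀
        rw [inner_neg_right] at this
        push_cast at this; linarith
      · have := h2 a ha
        rw [inner_neg_right] at this
        push_cast at this; linarith
  -- H_{γ,0} separates the base alcove from s(Y)
  have hmem : R.hyp γ 0 ∈ R.sepSet R.baseAlcove (⇑(sRefl γ) '' Y) := by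
    refine ⟨⟨γ, hγΦ, 0, rfl⟩, γ, hγΦ, 0, rfl, Or.inr ⟨?_, ?_⟩⟩
    · rintro _ ⟨y, hy, rfl⟩
      rw [inner_sRefl_self γ y hγ0]
      have := hYc hy γ hγp
      push_cast; linarith
    · intro x hx
      have := (hx γ hγp).1
      push_cast; linarith
  have hSfin : (R.sepSet R.baseAlcove Y).Finite := R.sepSet_finite ⟨a, ha⟩ ⟨y₀, hy₀⟩
  have hTfin : (R.sepSet R.baseAlcove (⇑(sRefl γ) '' Y)).Finite :=
    R.sepSet_finite ⟨a, ha⟩ ((Set.nonempty_of_mem hy₀).image _)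
  -- the image of the separating set injects into the new separating set
  have himg : (Set.image ⇑(sRefl γ)) '' R.sepSet R.baseAlcove Y ⊆
      R.sepSet R.baseAlcove (⇑(sRefl γ) '' Y) := by
    rintro _ ⟨H, hH, rfl⟩
    have hadm := R.sAff_adm hγΦ
    have h1 : R.IsHyp (⇑(sRefl γ) '' H) := by
      have := R.adm_isHyp hadm hH.1
      rwa [coe_sAff] at this
    have h2 : R.Separates (⇑(sRefl γ) '' H) (⇑(sRefl γ) '' R.baseAlcove) (⇑(sRefl γ) '' Y) := by
      have := R.adm_sep hadm hH.2
      rwa [coe_sAff] at this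
    have h3 : ⇑(sRefl γ) '' H ∈
        R.sepSet (⇑(sRefl γ) '' R.baseAlcove) (⇑(sRefl γ) '' Y) := ⟨h1, h2⟩
    have h4 := R.claimA R.baseAlcove_banded h3
    rcases h4 with h5 | h5
    · exfalso
      have h6 : ⇑(sRefl γ) '' H ∈ R.sepSet R.baseAlcove (⇑(sRefl γ) '' R.baseAlcove) := by
        rw [R.sepSet_symm]
        exact h5
      rw [R.wall_sepSet hγ] at h6
      have h7 : ⇑(sRefl γ) '' H = ⇑(sRefl γ) '' (R.hyp γ 0) := by
        rw [R.sRefl_image_hyp_self hγΦ]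
        exact h6
      have h8 : H = R.hyp γ 0 := hinj h7
      rw [h8] at hH
      exact hnotin hH
    · exact h5
  have hnotin2 : R.hyp γ 0 ∉ (Set.image ⇑(sRefl γ)) '' R.sepSet R.baseAlcove Y := by
    rintro ⟨H, hH, heq⟩
    have h7 : ⇑(sRefl γ) '' H = ⇑(sRefl γ) '' (R.hyp γ 0) := by
      rw [R.sRefl_image_hyp_self hγΦ, heq]
    have h8 : H = R.hyp γ 0 := hinj h7
    rw [h8] at hH
    exact hnotin hH
  have himgfin : ((Set.image ⇑(sRefl γ)) '' R.sepSet R.baseAlcove Y).Finite := hSfin.image _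
  calc R.dist R.baseAlcove Y
      = (R.sepSet R.baseAlcove Y).ncard := rfl
    _ = ((Set.image ⇑(sRefl γ)) '' R.sepSet R.baseAlcove Y).ncard :=
        (Set.ncard_image_of_injective _ hinj).symm
    _ < (insert (R.hyp γ 0) ((Set.image ⇑(sRefl γ)) '' R.sepSet R.baseAlcove Y)).ncard := by
        rw [Set.ncard_insert_of_notMem hnotin2 himgfin]
        omega
    _ ≤ (R.sepSet R.baseAlcove (⇑(sRefl γ) '' Y)).ncard := by
        refine Set.ncard_le_ncard ?_ hTfin
        exact Set.insert_subset hmem himg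
    _ = R.dist R.baseAlcove (⇑(sRefl γ) '' Y) := rfl

lemma move2 {γ : V} (hγ : γ ∈ R.simples) {h : V ≃ᵃ[ℝ] V} {w : V} {u : V ≃ₗᵢ[ℝ] V}
    (hadm : R.Adm h) (hhx : ∀ x, h x = w + u x) (huγΦ : u γ ∈ R.Φ) {n : ℤ}
    (hn : ⟪w, u γ⟫ = (n:ℝ)) (hcond : ∀ x ∈ R.baseAlcove, (n:ℝ) < ⟪x, u γ⟫) :
    R.dist R.baseAlcove (⇑h '' R.baseAlcove) <
      R.dist R.baseAlcove (⇑h '' (⇑(sRefl γ) '' R.baseAlcove)) := by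
  have hγp : γ ∈ R.pos := hγ.1
  have hγΦ : γ ∈ R.Φ := hγp.1
  have hγ0 : γ ≠ 0 := R.nonzero γ hγΦ
  have hAne : R.baseAlcove.Nonempty := R.baseAlcove_nonempty
  obtain ⟨a, ha⟩ := hAne
  have hkey : ∀ x : V, ⟪h x, u γ⟫ = (n:ℝ) + ⟪x, γ⟫ := by
    intro x
    rw [hhx x, inner_add_left, u.inner_map_map, hn]
  -- the image hyperplane H* = h(H_{γ,0}) = H_{uγ, n}
  have hHstar : ⇑h '' R.hyp γ 0 = R.hyp (u γ) n := by
    have := R.adm_image_hyp hhx (k := 0) hn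
    rwa [zero_add] at this
  -- H* separates A₀ from h(s(A₀))
  have hmemT : R.hyp (u γ) n ∈
      R.sepSet R.baseAlcove (⇑h '' (⇑(sRefl γ) '' R.baseAlcove)) := by
    refine ⟨⟨u γ, huγΦ, n, rfl⟩, u γ, huγΦ, n, rfl, Or.inr ⟨?_, ?_⟩⟩
    · rintro _ ⟨_, ⟨x, hx, rfl⟩, rfl⟩
      rw [hkey, inner_sRefl_self γ x hγ0]
      have := (hx γ hγp).1
      linarith
    · intro x hx
      exact hcond x hx
  -- H* does not separate A₀ from h(A₀)
  have hnotinS : R.hyp (u γ) n ∉ R.sepSet R.baseAlcove (⇑h '' R.baseAlcove) := by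
    rintro ⟨-, β, hβ, k, hHeq, hsides⟩
    have haA : (n:ℝ) < ⟪a, u γ⟫ := hcond a ha
    have hah : (n:ℝ) < ⟪h a, u γ⟫ := by
      rw [hkey]
      have := (ha γ hγp).1
      linarith
    have hham : h a ∈ ⇑h '' R.baseAlcove := ⟨a, ha, rfl⟩
    rcases R.hyp_eq_hyp huγΦ hβ hHeq with ⟨rfl, rfl⟩ | ⟨rfl, rfl⟩
    · rcases hsides with ⟨h1, -⟩ | ⟨h1, -⟩
      · have := h1 a ha; linarith
      · have := h1 (h a) hham; linarith
    · rcases hsides with ⟨-, h2⟩ | ⟨-, h2⟩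
      · have := h2 (h a) hham
        rw [inner_neg_right] at this
        push_cast at this; linarith
      · have := h2 a ha
        rw [inner_neg_right] at this
        push_cast at this; linarith
  -- the only hyperplane separating h(s(A₀)) from h(A₀) is H*
  have hwall2 : R.sepSet (⇑h '' (⇑(sRefl γ) '' R.baseAlcove)) (⇑h '' R.baseAlcove) =
      {R.hyp (u γ) n} := by
    rw [R.adm_sepSet_image hadm]
    rw [R.sepSet_symm, R.wall_sepSet hγ]
    rw [Set.image_singleton, hHstar]
  -- inclusion of separating sets
  have hsAb : R.Banded (⇑(sRefl γ) '' R.baseAlcove) := by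
    have := R.adm_banded (R.sAff_adm hγΦ) R.baseAlcove_banded
    rwa [coe_sAff] at this
  have hhsAb : R.Banded (⇑h '' (⇑(sRefl γ) '' R.baseAlcove)) := R.adm_banded hadm hsAb
  have hsub : R.sepSet R.baseAlcove (⇑h '' R.baseAlcove) ⊆
      R.sepSet R.baseAlcove (⇑h '' (⇑(sRefl γ) '' R.baseAlcove)) := by
    intro H hH
    rcases R.claimA hhsAb hH with h5 | h5
    · exact h5
    · exfalso
      rw [hwall2, Set.mem_singleton_iff] at h5
      rw [h5] at hH
      exact hnotinS hH
  have hSfin : (R.sepSet R.baseAlcove (⇑h '' R.baseAlcove)).Finite :=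
    R.sepSet_finite ⟨a, ha⟩ ((Set.nonempty_of_mem ha).image _)
  have hTfin : (R.sepSet R.baseAlcove (⇑h '' (⇑(sRefl γ) '' R.baseAlcove))).Finite :=
    R.sepSet_finite ⟨a, ha⟩ (((Set.nonempty_of_mem ha).image _).image _)
  calc R.dist R.baseAlcove (⇑h '' R.baseAlcove)
      = (R.sepSet R.baseAlcove (⇑h '' R.baseAlcove)).ncard := rfl
    _ < (insert (R.hyp (u γ) n) (R.sepSet R.baseAlcove (⇑h '' R.baseAlcove))).ncard := by
        rw [Set.ncard_insert_of_notMem hnotinS hSfin]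
        omega
    _ ≤ (R.sepSet R.baseAlcove (⇑h '' (⇑(sRefl γ) '' R.baseAlcove))).ncard := by
        refine Set.ncard_le_ncard ?_ hTfin
        exact Set.insert_subset hmemT hsub
    _ = R.dist R.baseAlcove (⇑h '' (⇑(sRefl γ) '' R.baseAlcove)) := rfl

end Moves

end RootSystemData

namespace RootSystemData

section Final

variable {V : Type*} [NormedAddCommGroup V] [InnerProductSpace ℝ V] (R : RootSystemData V)

lemma scale_pm {α β : V} (hα : α ∈ R.Φ) (hβ : β ∈ R.Φ) {lam : ℝ} (h : β = lam • α) :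
    lam = 1 ∨ lam = -1 := by
  rcases R.parallel_eq_or_neg hα hβ lam h with h1 | h1
  · left
    by_contra hne
    rw [h1] at h
    have h2 : (lam - 1) • α = 0 := by rw [sub_smul, one_smul, ← h, sub_self]
    rcases smul_eq_zero.mp h2 with h3 | h3
    · exact hne (by linarith [sub_eq_zero.mp h3])
    · exact R.nonzero α hα h3
  · right
    by_contra hne
    rw [h1] at h
    have h2 : (lam + 1) • α = 0 := by
      rw [add_smul, one_smul, ← h]; abel
    rcases smul_eq_zero.mp h2 with h3 | h3
    · exact hne (by linarith [eq_neg_of_add_eq_zero_left h3])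
    · exact R.nonzero α hα h3

end Final

end RootSystemData

/-- Dominant case. -/
theorem statement6 {V : Type*} [NormedAddCommGroup V] [InnerProductSpace ℝ V]
    [FiniteDimensional ℝ V] (R : RootSystemData V) (G : Subgroup (V ≃ᵃ[ℝ] V))
    (hGrefl : ∀ α ∈ R.Φ, ∀ k : ℤ, ∃ g ∈ G, ∀ x, g x = reflPt α (k : ℝ) x)
    (hGhyp : ∀ g ∈ G, ∀ H : Set V, R.IsHyp H → R.IsHyp (⇑g '' H))
    (hGfact : ∀ g ∈ G, ∃ w : V, ∃ u : V ≃ₗᵢ[ℝ] V, u ∈ R.W0 ∧ ∀ x, g x = w + u x)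
    (g : V ≃ᵃ[ℝ] V) (hg : g ∈ G) (hnt : ¬ RootSystemData.IsTranslation g)
    (hdom : ⇑g '' R.baseAlcove ⊆ R.chamber) :
    ∃ s : V ≃ᵃ[ℝ] V,
      (∃ α ∈ R.Φ, R.IsWall (R.hyp α 0) R.baseAlcove ∧ ∀ x, s x = reflPt α 0 x) ∧
      R.len (s * g) > R.len g ∧ R.len (g * s) > R.len g ∧ s * g * s ≠ g := by
  classical
  open RootSystemData in
  obtain ⟨w, u, hu, hgx⟩ := hGfact g hg
  have huΦ := R.W0_maps hu
  have hu1 : ∀ β ∈ R.Φ, u β ∈ R.Φ := huΦ.1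
  have hu2 : ∀ β ∈ R.Φ, u.symm β ∈ R.Φ := fun β hβ => huΦ.2 β hβ
  -- `u` is not the identity, else `g` would be a translation
  have hune : u ≠ 1 := by
    intro h1
    apply hnt
    refine ⟨w, fun x => ?_⟩
    rw [hgx x, h1]
    show w + x = x + w
    exact add_comm w x
  -- the translation part pairs integrally with every root
  have hwint : ∀ β ∈ R.Φ, ∃ n : ℤ, ⟪w, β⟫ = (n:ℝ) := by
    intro β hβ
    have hβ' : u.symm β ∈ R.Φ := hu2 β hβ
    obtain ⟨β'', hβ''Φ, m, hm⟩ := hGhyp g hg _ ⟨u.symm β, hβ', 0, rfl⟩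
    have him : ⇑g '' R.hyp (u.symm β) 0 = {y : V | ⟪y, β⟫ = ⟪w, β⟫} := by
      ext y
      constructor
      · rintro ⟨x, hx, rfl⟩
        show ⟪g x, β⟫ = ⟪w, β⟫
        rw [hgx x, inner_add_left]
        have hx0 : ⟪x, u.symm β⟫ = ((0:ℤ):ℝ) := hx
        have h2 : ⟪u x, β⟫ = ⟪x, u.symm β⟫ := by
          rw [← u.inner_map_map x (u.symm β), u.apply_symm_apply]
        rw [h2, hx0]
        simp
      · intro hy
        have hy' : ⟪y, β⟫ = ⟪w, β⟫ := hy
        refine ⟨u.symm (y - w), ?_, ?_⟩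
        · show ⟪u.symm (y - w), u.symm β⟫ = ((0:ℤ):ℝ)
          rw [u.symm.inner_map_map, inner_sub_left, hy']
          simp
        · rw [hgx, u.apply_symm_apply]
          abel
    rw [him] at hm
    obtain ⟨lam, hb, hd⟩ := plane_eq_aux (R.nonzero β hβ) hm
    rcases R.scale_pm hβ hβ''Φ hb with h1 | h1
    · refine ⟨m, ?_⟩
      rw [h1, one_mul] at hd
      linarith
    · refine ⟨-m, ?_⟩
      rw [h1] at hd
      push_cast
      linarith
  have hgadm : R.Adm g := ⟨w, u, hu1, hu2, hwint, hgx⟩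
  obtain ⟨a, ha⟩ := R.baseAlcove_nonempty
  -- choose a simple root sent to a negative root by `u`
  have hγex : ∃ γ ∈ R.simples, u γ ∉ R.pos := by
    by_contra hcon
    push_neg at hcon
    have hpos : ∀ β ∈ R.pos, u β ∈ R.pos := by
      intro β hβ
      have huβΦ : u β ∈ R.Φ := hu1 β hβ.1
      refine ⟨huβΦ, ?_⟩
      obtain ⟨nn, hnsupp, hnsum⟩ := R.pos_isNN β hβ
      have himg : u β = ∑ δ ∈ nn.support, (nn δ : ℝ) • (u δ) := by
        rw [hnsum, Finsupp.sum, map_sum]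
        exact Finset.sum_congr rfl fun δ _ => by rw [map_smul]
      have hξ : ⟪R.ξ, u β⟫ = ∑ δ ∈ nn.support, (nn δ : ℝ) * ⟪R.ξ, u δ⟫ := by
        rw [himg, inner_sum]
        exact Finset.sum_congr rfl fun δ _ => real_inner_smul_right _ _ _
      have hge : (0:ℝ) ≤ ⟪R.ξ, u β⟫ := by
        rw [hξ]
        refine Finset.sum_nonneg fun δ hδ => ?_
        have hδpos : u δ ∈ R.pos := hcon δ (hnsupp hδ)
        have := hδpos.2
        positivity
      rcases lt_or_gt_of_ne (R.regular _ huβΦ) with h | h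
      · linarith
      · exact h
    exact hune (R.eq_one_of_preserves_pos hu hpos)
  obtain ⟨γ, hγs, huγp⟩ := hγex
  have hγp : γ ∈ R.pos := hγs.1
  have hγΦ : γ ∈ R.Φ := hγp.1
  have hγ0 : γ ≠ 0 := R.nonzero γ hγΦ
  have hγγ : (0:ℝ) < ⟪γ, γ⟫ := R.inner_self_pos_of_mem hγΦ
  have hA : ⟪γ, γ⟫ ≠ (0:ℝ) := ne_of_gt hγγ
  have huγΦ : u γ ∈ R.Φ := hu1 γ hγΦ
  have hnuγ : -(u γ) ∈ R.pos := (R.mem_pos_or_neg huγΦ).resolve_left huγp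
  obtain ⟨n, hn⟩ := hwint (u γ) huγΦ
  -- the integer n = ⟪w, uγ⟫ is at most -1
  have hgaC : g a ∈ R.chamber := hdom ⟨a, ha, rfl⟩
  have h2 : (0:ℝ) < ⟪g a, -(u γ)⟫ := hgaC _ hnuγ
  have hkey2 : ⟪g a, -(u γ)⟫ = -(n:ℝ) - ⟪a, γ⟫ := by
    rw [hgx a, inner_add_left, inner_neg_right, inner_neg_right, hn, u.inner_map_map]
    ring
  have haγ := ha γ hγp
  have hnle : n ≤ -1 := by
    have h3 : (n:ℝ) < 0 := by
      rw [hkey2] at h2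
      linarith [haγ.1]
    have : n < 0 := by exact_mod_cast h3
    omega
  have hcond : ∀ x ∈ R.baseAlcove, (n:ℝ) < ⟪x, u γ⟫ := by
    intro x hx
    have h4 := (hx _ hnuγ).2
    rw [inner_neg_right] at h4
    have h5 : ((n:ℝ)) ≤ -1 := by exact_mod_cast hnle
    linarith
  -- obtain the affine reflection from the group `G`
  obtain ⟨s, hsG, hs⟩ := hGrefl γ hγΦ 0
  have hs' : ∀ x, s x = sRefl γ x := by
    intro x
    rw [hs x, sRefl_eq_reflPt]
    norm_num
  refine ⟨s, ⟨γ, hγΦ, ⟨γ, hγΦ, 0, rfl, ?_⟩, fun x => by rw [hs' x, sRefl_eq_reflPt]⟩, ?_, ?_, ?_⟩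
  · -- the wall property
    have himg : reflPt γ ((0:ℤ):ℝ) '' R.baseAlcove = ⇑(sRefl γ) '' R.baseAlcove := by
      refine Set.image_congr' fun x => ?_
      rw [sRefl_eq_reflPt]
      norm_num
    rw [himg, dist_eq_sepSet, R.wall_sepSet hγs, Set.ncard_singleton]
  · -- ℓ(sg) > ℓ(g)
    have himg2 : ⇑(s * g) '' R.baseAlcove = ⇑(sRefl γ) '' (⇑g '' R.baseAlcove) := by
      have hcoe : ⇑(s * g) = ⇑s ∘ ⇑g := rfl
      rw [hcoe, Set.image_comp]
      exact Set.image_congr' hs'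
    show R.dist R.baseAlcove (⇑(s * g) '' R.baseAlcove) >
      R.dist R.baseAlcove (⇑g '' R.baseAlcove)
    rw [himg2]
    exact R.move1 hγs hdom (R.adm_banded hgadm R.baseAlcove_banded)
      ((Set.nonempty_of_mem ha).image _)
  · -- ℓ(gs) > ℓ(g)
    have himg3 : ⇑(g * s) '' R.baseAlcove = ⇑g '' (⇑(sRefl γ) '' R.baseAlcove) := by
      have hcoe : ⇑(g * s) = ⇑g ∘ ⇑s := rfl
      have hsetc : ⇑s '' R.baseAlcove = ⇑(sRefl γ) '' R.baseAlcove := Set.image_congr' hs'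
      rw [hcoe, Set.image_comp, hsetc]
    show R.dist R.baseAlcove (⇑(g * s) '' R.baseAlcove) >
      R.dist R.baseAlcove (⇑g '' R.baseAlcove)
    rw [himg3]
    exact R.move2 hγs hgadm hgx huγΦ hn hcond
  · -- sgs ≠ g
    intro heq
    have hs0 : s 0 = 0 := by rw [hs' 0, map_zero]
    have hg0 : g 0 = w := by rw [hgx 0, map_zero, add_zero]
    have hsw : sRefl γ w = w := by
      have h0 : (s * g * s) 0 = g 0 := by rw [heq]
      have h0' : s (g (s 0)) = g 0 := h0
      rw [hs0, hg0] at h0'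
      rwa [hs' w] at h0'
    have hwγ : ⟪w, γ⟫ = 0 := by
      have h5 : (2 * ⟪w, γ⟫ / ⟪γ, γ⟫) • γ = 0 := by
        have := hsw
        rw [sRefl_apply] at this
        exact sub_eq_self.mp this
      rcases smul_eq_zero.mp h5 with h6 | h6
      · field_simp at h6
        linarith
      · exact absurd h6 hγ0
    by_cases huγeq : u γ = -γ
    · rw [huγeq, inner_neg_right, hwγ] at hn
      have h7 : (n:ℝ) = 0 := by linarith
      have : n = 0 := by exact_mod_cast h7
      omega
    · have hcomm : ∀ x, sRefl γ (u (sRefl γ x)) = u x := by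
        intro x
        have h7 : (s * g * s) x = g x := by rw [heq]
        have h8 : s (g (s x)) = g x := h7
        rw [hs' (g (s x)), hs' x, hgx (sRefl γ x), hgx x, map_add, hsw] at h8
        exact add_left_cancel h8
      have h9 := hcomm γ
      rw [sRefl_self γ hγ0, map_neg, map_neg, neg_eq_iff_eq_neg] at h9
      -- h9 : sRefl γ (u γ) = -(u γ)
      rw [sRefl_apply] at h9
      set c2 : ℝ := 2 * ⟪u γ, γ⟫ / ⟪γ, γ⟫ with hc2
      have h12 : u γ + u γ = c2 • γ := by
        have h11 : u γ - c2 • γ + (u γ + c2 • γ) = -(u γ) + (u γ + c2 • γ) := by rw [h9]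
        have hl : u γ - c2 • γ + (u γ + c2 • γ) = u γ + u γ := by abel
        have hr : -(u γ) + (u γ + c2 • γ) = c2 • γ := by abel
        rw [hl, hr] at h11
        exact h11
      have h13 : u γ = ((2:ℝ)⁻¹ * c2) • γ := by
        have h14 : (2:ℝ) • u γ = c2 • γ := by rw [two_smul]; exact h12
        have h15 := congrArg (fun z => (2:ℝ)⁻¹ • z) h14
        simp only [smul_smul] at h15
        rw [← h15]
        norm_num
      rcases R.parallel_eq_or_neg hγΦ huγΦ _ h13 with h16 | h16
      · exact huγp (by rw [h16]; exact hγp)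
      · exact huγeq h16
end

section
/- An element h ∈ 𝓗 lies in the center Z(𝓗) if and only if its coefficients satisfy: (i) h_{xτ} = h_{τx} for every x ∈ W̃ and τ ∈ Ω; and (ii) for every x ∈ W̃ and s ∈ S: q(s)·h_{sx} = q(s)·h_{xs} if ℓ(sx) > ℓ(x) and ℓ(xs) > ℓ(x); q(s)·h_{sx} = h_{xs} + (q(s)−1)·h_x if ℓ(sx) > ℓ(x) > ℓ(xs); h_{sx} + (q(s)−1)·h_x = q(s)·h_{xs} if ℓ(sx) < ℓ(x) < ℓ(xs); and h_{sx} = h_{xs} if ℓ(sx) < ℓ(x) and ℓ(xs) < ℓ(x). -/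
section

variable {B W Ω : Type*} [Group W] [Group Ω] {M : CoxeterMatrix B}

/-- The length function on `W̃ = W ⋊ Ω`, extending the Coxeter length of `(W, S)` by
`ℓ(wτ) = ℓ(w)`. -/
noncomputable def extLen (cs : CoxeterSystem M W) {φ : Ω →* MulAut W}
    (x : W ⋊[φ] Ω) : ℕ := cs.length x.left

/-- `x ∈ W̃` is a simple reflection, i.e. an element of `S` viewed inside `W̃`. -/
def IsSimpleElt (cs : CoxeterSystem M W) {φ : Ω →* MulAut W} (x : W ⋊[φ] Ω) : Prop :=
  ∃ i : B, x = SemidirectProduct.inl (cs.simple i)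

/-- The sequence of iterated conjugates `x, s₁xs₁, s₂s₁xs₁s₂, …`. -/
def conjSeqW {φ : Ω →* MulAut W} (x : W ⋊[φ] Ω) (ss : ℕ → W ⋊[φ] Ω) : ℕ → W ⋊[φ] Ω
  | 0 => x
  | n + 1 => ss n * conjSeqW x ss n * ss n

/-- `x` and `x′` are laterally conjugate: `x′` is obtained from `x` by a sequence of
length-preserving conjugations by simple reflections. -/
noncomputable def LaterallyConj (cs : CoxeterSystem M W) {φ : Ω →* MulAut W}
    (x x' : W ⋊[φ] Ω) : Prop :=
  ∃ (n : ℕ) (ss : ℕ → W ⋊[φ] Ω), (∀ i < n, IsSimpleElt cs (ss i)) ∧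
    (∀ i < n, extLen cs (conjSeqW x ss (i + 1)) = extLen cs x) ∧ x' = conjSeqW x ss n

/-- `x` has the Direct Diamond Property. -/
noncomputable def DirectDiamond (cs : CoxeterSystem M W) {φ : Ω →* MulAut W}
    (x : W ⋊[φ] Ω) : Prop :=
  ∃ s : W ⋊[φ] Ω, IsSimpleElt cs s ∧ extLen cs x < extLen cs (s * x) ∧
    extLen cs x < extLen cs (x * s) ∧ s * x * s ≠ x

/-- `x` has the Diamond Property: it is laterally conjugate to an element with the
Direct Diamond Property. -/
noncomputable def Diamond (cs : CoxeterSystem M W) {φ : Ω →* MulAut W}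
    (x : W ⋊[φ] Ω) : Prop :=
  ∃ x' : W ⋊[φ] Ω, LaterallyConj cs x x' ∧ DirectDiamond cs x'

end


open SemidirectProduct

section

variable {B W Ω H : Type*} [Group W] [Group Ω] [Ring H] [Algebra ℂ H]
    {M : CoxeterMatrix B} (cs : CoxeterSystem M W) {φ : Ω →* MulAut W}

lemma aux_simple_sq {s : W ⋊[φ] Ω} (hs : IsSimpleElt cs s) : s * s = 1 := by
  obtain ⟨i, rfl⟩ := hs
  rw [← map_mul, cs.simple_mul_simple_self, map_one]

lemma aux_extLen_inl_mul (w : W) (x : W ⋊[φ] Ω) :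
    extLen cs (inl w * x) = cs.length (w * x.left) := by
  simp [extLen]

lemma aux_len_smul_ne {s : W ⋊[φ] Ω} (hs : IsSimpleElt cs s) (x : W ⋊[φ] Ω) :
    extLen cs (s * x) ≠ extLen cs x := by
  obtain ⟨i, rfl⟩ := hs
  rw [aux_extLen_inl_mul]
  exact cs.length_simple_mul_ne x.left i

lemma aux_len_muls_ne (hφ : ∀ (τ : Ω) (i : B), ∃ j : B, φ τ (cs.simple i) = cs.simple j)
    {s : W ⋊[φ] Ω} (hs : IsSimpleElt cs s) (x : W ⋊[φ] Ω) :
    extLen cs (x * s) ≠ extLen cs x := by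
  obtain ⟨i, rfl⟩ := hs
  obtain ⟨j, hj⟩ := hφ x.right i
  unfold extLen
  rw [mul_left, left_inl, hj]
  exact cs.length_mul_simple_ne x.left j

end

section

variable {B W Ω H : Type*} [Group W] [Group Ω] [Ring H] [Algebra ℂ H]
    {M : CoxeterMatrix B} (cs : CoxeterSystem M W) {φ : Ω →* MulAut W}
    (T : Module.Basis (W ⋊[φ] Ω) ℂ H) (q : W ⋊[φ] Ω → ℕ)

lemma aux_coeff_left_gt
    (hTleft : ∀ s x : W ⋊[φ] Ω, IsSimpleElt cs s →
      (extLen cs x < extLen cs (s * x) → T s * T x = T (s * x)) ∧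
      (extLen cs (s * x) < extLen cs x →
        T s * T x = ((q s : ℂ) - 1) • T x + (q s : ℂ) • T (s * x)))
    {s : W ⋊[φ] Ω} (hs : IsSimpleElt cs s) (h : H) (y : W ⋊[φ] Ω)
    (hy : extLen cs y < extLen cs (s * y)) :
    T.repr (T s * h) y = (q s : ℂ) * T.repr h (s * y) := by
  classical
  have hss := aux_simple_sq cs hs
  have key : (T.coord y).comp (LinearMap.mulLeft ℂ (T s)) = (q s : ℂ) • T.coord (s * y) := by
    apply T.ext
    intro x
    have hiff : s * x = y ↔ x = s * y := by
      constructor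
      · rintro rfl; rw [← mul_assoc, hss, one_mul]
      · rintro rfl; rw [← mul_assoc, hss, one_mul]
    simp only [LinearMap.comp_apply, LinearMap.mulLeft_apply, LinearMap.smul_apply,
      Module.Basis.coord_apply, smul_eq_mul]
    rcases lt_or_gt_of_ne (aux_len_smul_ne cs hs x) with hl | hl
    · -- ℓ(sx) < ℓ(x)
      rw [(hTleft s x hs).2 hl]
      have hxy : x ≠ y := by
        rintro rfl; exact absurd hl (not_lt.mpr hy.le)
      simp only [map_add, map_smul, Module.Basis.repr_self, Finsupp.coe_add, Finsupp.coe_smul,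
        Pi.add_apply, Pi.smul_apply, Finsupp.single_apply, smul_eq_mul]
      rw [if_neg hxy]
      by_cases hx : x = s * y
      · rw [if_pos (hiff.mpr hx), if_pos hx]; ring
      · rw [if_neg (fun hc => hx (hiff.mp hc)), if_neg hx]; ring
    · -- ℓ(x) < ℓ(sx)
      rw [(hTleft s x hs).1 hl]
      have h1 : s * x ≠ y := by
        intro hc
        have hx : x = s * y := hiff.mp hc
        rw [hc, hx] at hl
        exact absurd hl (not_lt.mpr hy.le)
      have h2 : x ≠ s * y := fun hc => h1 (hiff.mpr hc)
      simp only [Module.Basis.repr_self, Finsupp.single_apply]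
      rw [if_neg h1, if_neg h2, mul_zero]
  calc T.repr (T s * h) y = (T.coord y).comp (LinearMap.mulLeft ℂ (T s)) h := rfl
    _ = ((q s : ℂ) • T.coord (s * y)) h := by rw [key]
    _ = (q s : ℂ) * T.repr h (s * y) := rfl

end

section

variable {B W Ω H : Type*} [Group W] [Group Ω] [Ring H] [Algebra ℂ H]
    {M : CoxeterMatrix B} (cs : CoxeterSystem M W) {φ : Ω →* MulAut W}
    (T : Module.Basis (W ⋊[φ] Ω) ℂ H) (q : W ⋊[φ] Ω → ℕ)

lemma aux_coeff_left_lt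
    (hTleft : ∀ s x : W ⋊[φ] Ω, IsSimpleElt cs s →
      (extLen cs x < extLen cs (s * x) → T s * T x = T (s * x)) ∧
      (extLen cs (s * x) < extLen cs x →
        T s * T x = ((q s : ℂ) - 1) • T x + (q s : ℂ) • T (s * x)))
    {s : W ⋊[φ] Ω} (hs : IsSimpleElt cs s) (h : H) (y : W ⋊[φ] Ω)
    (hy : extLen cs (s * y) < extLen cs y) :
    T.repr (T s * h) y = T.repr h (s * y) + ((q s : ℂ) - 1) * T.repr h y := by
  classical
  have hss := aux_simple_sq cs hs
  have key : (T.coord y).comp (LinearMap.mulLeft ℂ (T s))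
      = T.coord (s * y) + ((q s : ℂ) - 1) • T.coord y := by
    apply T.ext
    intro x
    have hiff : s * x = y ↔ x = s * y := by
      constructor
      · rintro rfl; rw [← mul_assoc, hss, one_mul]
      · rintro rfl; rw [← mul_assoc, hss, one_mul]
    simp only [LinearMap.comp_apply, LinearMap.mulLeft_apply, LinearMap.add_apply,
      LinearMap.smul_apply, Module.Basis.coord_apply, smul_eq_mul]
    rcases lt_or_gt_of_ne (aux_len_smul_ne cs hs x) with hl | hl
    · -- ℓ(sx) < ℓ(x)
      rw [(hTleft s x hs).2 hl]
      have h1 : s * x ≠ y := by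
        intro hc
        have hx : x = s * y := hiff.mp hc
        rw [hc, hx] at hl
        exact absurd hl (not_lt.mpr hy.le)
      have h2 : x ≠ s * y := fun hc => h1 (hiff.mpr hc)
      simp only [map_add, map_smul, Module.Basis.repr_self, Finsupp.coe_add, Finsupp.coe_smul,
        Pi.add_apply, Pi.smul_apply, Finsupp.single_apply, smul_eq_mul]
      rw [if_neg h1, if_neg h2]; ring
    · -- ℓ(x) < ℓ(sx)
      rw [(hTleft s x hs).1 hl]
      have hxy : x ≠ y := by
        rintro rfl; exact absurd hl (not_lt.mpr hy.le)
      simp only [Module.Basis.repr_self, Finsupp.single_apply]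
      rw [if_neg hxy, if_congr hiff rfl rfl]; ring
  calc T.repr (T s * h) y = (T.coord y).comp (LinearMap.mulLeft ℂ (T s)) h := rfl
    _ = _ := by rw [key]; rfl

lemma aux_coeff_right_gt (hφ : ∀ (τ : Ω) (i : B), ∃ j : B, φ τ (cs.simple i) = cs.simple j)
    (hTright : ∀ s x : W ⋊[φ] Ω, IsSimpleElt cs s →
      (extLen cs x < extLen cs (x * s) → T x * T s = T (x * s)) ∧
      (extLen cs (x * s) < extLen cs x →
        T x * T s = ((q s : ℂ) - 1) • T x + (q s : ℂ) • T (x * s)))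
    {s : W ⋊[φ] Ω} (hs : IsSimpleElt cs s) (h : H) (y : W ⋊[φ] Ω)
    (hy : extLen cs y < extLen cs (y * s)) :
    T.repr (h * T s) y = (q s : ℂ) * T.repr h (y * s) := by
  classical
  have hss := aux_simple_sq cs hs
  have key : (T.coord y).comp (LinearMap.mulRight ℂ (T s)) = (q s : ℂ) • T.coord (y * s) := by
    apply T.ext
    intro x
    have hiff : x * s = y ↔ x = y * s := by
      constructor
      · rintro rfl; rw [mul_assoc, hss, mul_one]
      · rintro rfl; rw [mul_assoc, hss, mul_one]
    simp only [LinearMap.comp_apply, LinearMap.mulRight_apply, LinearMap.smul_apply,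
      Module.Basis.coord_apply, smul_eq_mul]
    rcases lt_or_gt_of_ne (aux_len_muls_ne cs hφ hs x) with hl | hl
    · rw [(hTright s x hs).2 hl]
      have hxy : x ≠ y := by
        rintro rfl; exact absurd hl (not_lt.mpr hy.le)
      simp only [map_add, map_smul, Module.Basis.repr_self, Finsupp.coe_add, Finsupp.coe_smul,
        Pi.add_apply, Pi.smul_apply, Finsupp.single_apply, smul_eq_mul]
      rw [if_neg hxy, if_congr hiff rfl rfl]; ring
    · rw [(hTright s x hs).1 hl]
      have h1 : x * s ≠ y := by
        intro hc
        have hx : x = y * s := hiff.mp hc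
        rw [hc, hx] at hl
        exact absurd hl (not_lt.mpr hy.le)
      have h2 : x ≠ y * s := fun hc => h1 (hiff.mpr hc)
      simp only [Module.Basis.repr_self, Finsupp.single_apply]
      rw [if_neg h1, if_neg h2, mul_zero]
  calc T.repr (h * T s) y = (T.coord y).comp (LinearMap.mulRight ℂ (T s)) h := rfl
    _ = _ := by rw [key]; rfl

lemma aux_coeff_right_lt (hφ : ∀ (τ : Ω) (i : B), ∃ j : B, φ τ (cs.simple i) = cs.simple j)
    (hTright : ∀ s x : W ⋊[φ] Ω, IsSimpleElt cs s →
      (extLen cs x < extLen cs (x * s) → T x * T s = T (x * s)) ∧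
      (extLen cs (x * s) < extLen cs x →
        T x * T s = ((q s : ℂ) - 1) • T x + (q s : ℂ) • T (x * s)))
    {s : W ⋊[φ] Ω} (hs : IsSimpleElt cs s) (h : H) (y : W ⋊[φ] Ω)
    (hy : extLen cs (y * s) < extLen cs y) :
    T.repr (h * T s) y = T.repr h (y * s) + ((q s : ℂ) - 1) * T.repr h y := by
  classical
  have hss := aux_simple_sq cs hs
  have key : (T.coord y).comp (LinearMap.mulRight ℂ (T s))
      = T.coord (y * s) + ((q s : ℂ) - 1) • T.coord y := by
    apply T.ext
    intro x
    have hiff : x * s = y ↔ x = y * s := by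
      constructor
      · rintro rfl; rw [mul_assoc, hss, mul_one]
      · rintro rfl; rw [mul_assoc, hss, mul_one]
    simp only [LinearMap.comp_apply, LinearMap.mulRight_apply, LinearMap.add_apply,
      LinearMap.smul_apply, Module.Basis.coord_apply, smul_eq_mul]
    rcases lt_or_gt_of_ne (aux_len_muls_ne cs hφ hs x) with hl | hl
    · rw [(hTright s x hs).2 hl]
      have h1 : x * s ≠ y := by
        intro hc
        have hx : x = y * s := hiff.mp hc
        rw [hc, hx] at hl
        exact absurd hl (not_lt.mpr hy.le)
      have h2 : x ≠ y * s := fun hc => h1 (hiff.mpr hc)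
      simp only [map_add, map_smul, Module.Basis.repr_self, Finsupp.coe_add, Finsupp.coe_smul,
        Pi.add_apply, Pi.smul_apply, Finsupp.single_apply, smul_eq_mul]
      rw [if_neg h1, if_neg h2]; ring
    · rw [(hTright s x hs).1 hl]
      have hxy : x ≠ y := by
        rintro rfl; exact absurd hl (not_lt.mpr hy.le)
      simp only [Module.Basis.repr_self, Finsupp.single_apply]
      rw [if_neg hxy, if_congr hiff rfl rfl]; ring
  calc T.repr (h * T s) y = (T.coord y).comp (LinearMap.mulRight ℂ (T s)) h := rfl
    _ = _ := by rw [key]; rfl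

lemma aux_coeff_tau_left
    (hTom : ∀ (τ : Ω) (x : W ⋊[φ] Ω),
      T (SemidirectProduct.inr τ * x) = T (SemidirectProduct.inr τ) * T x ∧
      T (x * SemidirectProduct.inr τ) = T x * T (SemidirectProduct.inr τ))
    (τ : Ω) (h : H) (y : W ⋊[φ] Ω) :
    T.repr (T (SemidirectProduct.inr τ) * h) y
      = T.repr h ((SemidirectProduct.inr τ : W ⋊[φ] Ω)⁻¹ * y) := by
  classical
  have key : (T.coord y).comp (LinearMap.mulLeft ℂ (T (SemidirectProduct.inr τ)))
      = T.coord ((SemidirectProduct.inr τ : W ⋊[φ] Ω)⁻¹ * y) := by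
    apply T.ext
    intro x
    simp only [LinearMap.comp_apply, LinearMap.mulLeft_apply, Module.Basis.coord_apply]
    rw [← (hTom τ x).1]
    simp only [Module.Basis.repr_self, Finsupp.single_apply]
    simp only [eq_inv_mul_iff_mul_eq]
  calc T.repr (T (SemidirectProduct.inr τ) * h) y
      = (T.coord y).comp (LinearMap.mulLeft ℂ (T (SemidirectProduct.inr τ))) h := rfl
    _ = _ := by rw [key]; rfl

lemma aux_coeff_tau_right
    (hTom : ∀ (τ : Ω) (x : W ⋊[φ] Ω),
      T (SemidirectProduct.inr τ * x) = T (SemidirectProduct.inr τ) * T x ∧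
      T (x * SemidirectProduct.inr τ) = T x * T (SemidirectProduct.inr τ))
    (τ : Ω) (h : H) (y : W ⋊[φ] Ω) :
    T.repr (h * T (SemidirectProduct.inr τ)) y
      = T.repr h (y * (SemidirectProduct.inr τ : W ⋊[φ] Ω)⁻¹) := by
  classical
  have key : (T.coord y).comp (LinearMap.mulRight ℂ (T (SemidirectProduct.inr τ)))
      = T.coord (y * (SemidirectProduct.inr τ : W ⋊[φ] Ω)⁻¹) := by
    apply T.ext
    intro x
    simp only [LinearMap.comp_apply, LinearMap.mulRight_apply, Module.Basis.coord_apply]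
    rw [← (hTom τ x).2]
    simp only [Module.Basis.repr_self, Finsupp.single_apply]
    simp only [eq_mul_inv_iff_mul_eq]
  calc T.repr (h * T (SemidirectProduct.inr τ)) y
      = (T.coord y).comp (LinearMap.mulRight ℂ (T (SemidirectProduct.inr τ))) h := rfl
    _ = _ := by rw [key]; rfl

end

/-- the equations defining the center of the Hecke algebra. -/
theorem statement11 {B W Ω H : Type*} [Group W] [Group Ω] [Ring H] [Algebra ℂ H]
    {M : CoxeterMatrix B} (cs : CoxeterSystem M W) (φ : Ω →* MulAut W)
    (hφ : ∀ (τ : Ω) (i : B), ∃ j : B, φ τ (cs.simple i) = cs.simple j)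
    (T : Module.Basis (W ⋊[φ] Ω) ℂ H)
    (q : W ⋊[φ] Ω → ℕ)
    (hq : ∀ s t : W ⋊[φ] Ω, IsSimpleElt cs s → IsSimpleElt cs t → IsConj s t → q s = q t)
    (hTleft : ∀ s x : W ⋊[φ] Ω, IsSimpleElt cs s →
      (extLen cs x < extLen cs (s * x) → T s * T x = T (s * x)) ∧
      (extLen cs (s * x) < extLen cs x →
        T s * T x = ((q s : ℂ) - 1) • T x + (q s : ℂ) • T (s * x)))
    (hTright : ∀ s x : W ⋊[φ] Ω, IsSimpleElt cs s →
      (extLen cs x < extLen cs (x * s) → T x * T s = T (x * s)) ∧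
      (extLen cs (x * s) < extLen cs x →
        T x * T s = ((q s : ℂ) - 1) • T x + (q s : ℂ) • T (x * s)))
    (hTom : ∀ (τ : Ω) (x : W ⋊[φ] Ω),
      T (SemidirectProduct.inr τ * x) = T (SemidirectProduct.inr τ) * T x ∧
      T (x * SemidirectProduct.inr τ) = T x * T (SemidirectProduct.inr τ))
    (h : H) :
    h ∈ Set.center H ↔
      ((∀ (x : W ⋊[φ] Ω) (τ : Ω),
          T.repr h (x * SemidirectProduct.inr τ) = T.repr h (SemidirectProduct.inr τ * x)) ∧
        ∀ x s : W ⋊[φ] Ω, IsSimpleElt cs s →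
          ((extLen cs x < extLen cs (s * x) ∧ extLen cs x < extLen cs (x * s) →
              (q s : ℂ) * T.repr h (s * x) = (q s : ℂ) * T.repr h (x * s)) ∧
            (extLen cs (x * s) < extLen cs x ∧ extLen cs x < extLen cs (s * x) →
              (q s : ℂ) * T.repr h (s * x) = T.repr h (x * s) + ((q s : ℂ) - 1) * T.repr h x) ∧
            (extLen cs (s * x) < extLen cs x ∧ extLen cs x < extLen cs (x * s) →
              T.repr h (s * x) + ((q s : ℂ) - 1) * T.repr h x = (q s : ℂ) * T.repr h (x * s)) ∧
            (extLen cs (s * x) < extLen cs x ∧ extLen cs (x * s) < extLen cs x →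
              T.repr h (s * x) = T.repr h (x * s)))) := by

  classical
  constructor
  · intro hc
    have hcomm : ∀ g : H, g * h = h * g := Semigroup.mem_center_iff.mp hc
    constructor
    · intro x τ
      have e := hcomm (T (SemidirectProduct.inr τ))
      have e1 := aux_coeff_tau_left T hTom τ h
        (SemidirectProduct.inr τ * x * SemidirectProduct.inr τ)
      have e2 := aux_coeff_tau_right T hTom τ h
        (SemidirectProduct.inr τ * x * SemidirectProduct.inr τ)
      rw [e] at e1
      have e3 := e1.symm.trans e2
      convert e3 using 2 <;> group
    · intro x s hs
      have e := hcomm (T s)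
      refine ⟨?_, ?_, ?_, ?_⟩
      · rintro ⟨h1, h2⟩
        have l := aux_coeff_left_gt cs T q hTleft hs h x h1
        have r := aux_coeff_right_gt cs T q hφ hTright hs h x h2
        rw [e] at l
        exact l.symm.trans r
      · rintro ⟨h2, h1⟩
        have l := aux_coeff_left_gt cs T q hTleft hs h x h1
        have r := aux_coeff_right_lt cs T q hφ hTright hs h x h2
        rw [e] at l
        exact l.symm.trans r
      · rintro ⟨h1, h2⟩
        have l := aux_coeff_left_lt cs T q hTleft hs h x h1
        have r := aux_coeff_right_gt cs T q hφ hTright hs h x h2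
        rw [e] at l
        exact l.symm.trans r
      · rintro ⟨h1, h2⟩
        have l := aux_coeff_left_lt cs T q hTleft hs h x h1
        have r := aux_coeff_right_lt cs T q hφ hTright hs h x h2
        rw [e] at l
        have := l.symm.trans r
        exact add_right_cancel this
  · rintro ⟨c1, c2⟩
    have Hτ : ∀ τ : Ω, T (SemidirectProduct.inr τ) * h = h * T (SemidirectProduct.inr τ) := by
      intro τ
      apply T.repr.injective
      ext y
      rw [aux_coeff_tau_left T hTom τ h y, aux_coeff_tau_right T hTom τ h y]
      have := c1 y τ⁻¹
      rw [map_inv] at this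
      exact this.symm
    have Hs : ∀ s : W ⋊[φ] Ω, IsSimpleElt cs s → T s * h = h * T s := by
      intro s hs
      apply T.repr.injective
      ext y
      rcases lt_or_gt_of_ne (aux_len_smul_ne cs hs y) with hl | hl <;>
        rcases lt_or_gt_of_ne (aux_len_muls_ne cs hφ hs y) with hr | hr
      · rw [aux_coeff_left_lt cs T q hTleft hs h y hl,
          aux_coeff_right_lt cs T q hφ hTright hs h y hr,
          (c2 y s hs).2.2.2 ⟨hl, hr⟩]
      · rw [aux_coeff_left_lt cs T q hTleft hs h y hl,
          aux_coeff_right_gt cs T q hφ hTright hs h y hr]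
        exact (c2 y s hs).2.2.1 ⟨hl, hr⟩
      · rw [aux_coeff_left_gt cs T q hTleft hs h y hl,
          aux_coeff_right_lt cs T q hφ hTright hs h y hr]
        exact (c2 y s hs).2.1 ⟨hr, hl⟩
      · rw [aux_coeff_left_gt cs T q hTleft hs h y hl,
          aux_coeff_right_gt cs T q hφ hTright hs h y hr]
        exact (c2 y s hs).1 ⟨hl, hr⟩
    have Hx : ∀ (n : ℕ) (x : W ⋊[φ] Ω), extLen cs x = n → T x * h = h * T x := by
      intro n
      induction n using Nat.strong_induction_on with
      | _ n ih =>
        intro x hx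
        rcases Nat.eq_zero_or_pos n with rfl | hpos
        · have hx1 : x.left = 1 := cs.length_eq_zero_iff.mp (by simpa [extLen] using hx)
          have hxe : x = SemidirectProduct.inr x.right := by
            conv_lhs => rw [← SemidirectProduct.inl_left_mul_inr_right x]
            rw [hx1, map_one, one_mul]
          rw [hxe]
          exact Hτ x.right
        · have hne : x.left ≠ 1 := by
            intro he
            rw [← hx] at hpos
            simp [extLen, he] at hpos
          obtain ⟨i, hi⟩ := cs.exists_leftDescent_of_ne_one hne
          set s : W ⋊[φ] Ω := SemidirectProduct.inl (cs.simple i) with hs_def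
          have hs : IsSimpleElt cs s := ⟨i, rfl⟩
          have hsq : s * s = 1 := aux_simple_sq cs hs
          have hlt : extLen cs (s * x) < extLen cs x := by
            rw [hs_def, aux_extLen_inl_mul]
            exact hi
          have hxx : x = s * (s * x) := by rw [← mul_assoc, hsq, one_mul]
          have hT : T s * T (s * x) = T x := by
            have h2 := (hTleft s (s * x) hs).1 (by rw [← hxx]; exact hlt)
            rwa [← hxx] at h2
          have ihx := ih (extLen cs (s * x)) (hx ▸ hlt) (s * x) rfl
          calc T x * h = T s * (T (s * x) * h) := by rw [← hT, mul_assoc]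
            _ = T s * (h * T (s * x)) := by rw [ihx]
            _ = (T s * h) * T (s * x) := by rw [mul_assoc]
            _ = (h * T s) * T (s * x) := by rw [Hs s hs]
            _ = h * T x := by rw [mul_assoc, hT]
    rw [Semigroup.mem_center_iff]
    intro g
    have key : (LinearMap.mulRight ℂ h : H →ₗ[ℂ] H) = LinearMap.mulLeft ℂ h :=
      T.ext fun x => by simpa using Hx (extLen cs x) x rfl
    have := LinearMap.congr_fun key g
    simpa using this
end
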